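/- arXiv:1106.5010 — 2 statements merged into one kernel-verified Lean document; each statement's English description precedes it below -/
import Mathlib

section
/- In a J-category in which all objects are cofibrant models, if p : E → B and p' : E' → B' are weakly equivalent morphisms, then Gsecat(p) = Gsecat(p'). -/
open CategoryTheory CategoryTheory.Limits ZeroObject

universe v u v' u'

variable (C : Type u) [Category.{v} C] [HasZeroObject C] [HasZeroMorphisms C]

/-- A category satisfying axioms (J1)-(J4) of Doeraene's J-categories:
a pointed category with fibrations, cofibrations and weak equivalences. -/
structure PreJCat where
  fib : MorphismProperty C
  cofib : MorphismProperty C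
  weq : MorphismProperty C
  /-- (J1) isomorphisms are trivial cofibrations -/
  iso_triv_cofib : ∀ {X Y : C} (f : X ⟶ Y), IsIso f → cofib f ∧ weq f
  /-- (J1) isomorphisms are trivial fibrations -/
  iso_triv_fib : ∀ {X Y : C} (f : X ⟶ Y), IsIso f → fib f ∧ weq f
  fib_comp : ∀ {X Y Z : C} {f : X ⟶ Y} {g : Y ⟶ Z}, fib f → fib g → fib (f ≫ g)
  cofib_comp : ∀ {X Y Z : C} {f : X ⟶ Y} {g : Y ⟶ Z}, cofib f → cofib g → cofib (f ≫ g)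
  /-- (J1) two-out-of-three for weak equivalences -/
  weq_comp : ∀ {X Y Z : C} {f : X ⟶ Y} {g : Y ⟶ Z}, weq f → weq g → weq (f ≫ g)
  weq_of_comp_left : ∀ {X Y Z : C} {f : X ⟶ Y} {g : Y ⟶ Z}, weq g → weq (f ≫ g) → weq f
  weq_of_comp_right : ∀ {X Y Z : C} {f : X ⟶ Y} {g : Y ⟶ Z}, weq f → weq (f ≫ g) → weq g
  /-- (J2) pullbacks of fibrations exist, and the base extension is a fibration -/
  pb_exists : ∀ {E B B' : C} (p : E ⟶ B) (f : B' ⟶ B), fib p →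
    ∃ (P : C) (fb : P ⟶ E) (pb : P ⟶ B'), IsPullback fb pb p f ∧ fib pb
  /-- (J2) base extensions of weak equivalences along fibrations are weak equivalences -/
  pb_weq : ∀ {E B B' P : C} {p : E ⟶ B} {f : B' ⟶ B} {fb : P ⟶ E} {pb : P ⟶ B'},
    fib p → IsPullback fb pb p f → (weq f → weq fb) ∧ (weq p → weq pb)
  /-- (J2) dual: pushouts of cofibrations exist -/
  po_exists : ∀ {A X Y : C} (i : A ⟶ X) (g : A ⟶ Y), cofib i →
    ∃ (Q : C) (inl : X ⟶ Q) (inr : Y ⟶ Q), IsPushout i g inl inr ∧ cofib inr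
  po_weq : ∀ {A X Y Q : C} {i : A ⟶ X} {g : A ⟶ Y} {inl : X ⟶ Q} {inr : Y ⟶ Q},
    cofib i → IsPushout i g inl inr → (weq g → weq inl) ∧ (weq i → weq inr)
  /-- (J3) F-factorizations exist -/
  F_fac : ∀ {X Y : C} (f : X ⟶ Y), ∃ (Z : C) (τ : X ⟶ Z) (q : Z ⟶ Y),
    weq τ ∧ fib q ∧ τ ≫ q = f
  /-- (J3) C-factorizations exist -/
  C_fac : ∀ {X Y : C} (f : X ⟶ Y), ∃ (Z : C) (i : X ⟶ Z) (σ : Z ⟶ Y),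
    cofib i ∧ weq σ ∧ i ≫ σ = f
  /-- (J4) cofibrant replacements exist -/
  cof_replace : ∀ X : C, ∃ (Xb : C) (q : Xb ⟶ X), fib q ∧ weq q ∧
    (∀ {E : C} (p : E ⟶ Xb), fib p → weq p → ∃ s : Xb ⟶ E, s ≫ p = 𝟙 Xb)

variable {C}

namespace PreJCat

/-- An object is a cofibrant model if every trivial fibration onto it admits a section. -/
def CofModel (P : PreJCat C) (X : C) : Prop :=
  ∀ {E : C} (p : E ⟶ X), P.fib p → P.weq p → ∃ s : X ⟶ E, s ≫ p = 𝟙 X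

/-- An object is e-fibrant if the morphism to the zero object is a fibration. -/
def EFibrant (P : PreJCat C) (X : C) : Prop := P.fib (0 : X ⟶ 0)

/-- `f` admits a weak lifting along `g` (all objects being cofibrant models). -/
def WeakLifting (P : PreJCat C) {A B Cc : C} (f : A ⟶ B) (g : Cc ⟶ B) : Prop :=
  ∃ (E : C) (τ : Cc ⟶ E) (q : E ⟶ B), P.weq τ ∧ P.fib q ∧ τ ≫ q = g ∧
    ∃ s : A ⟶ E, s ≫ q = f

/-- `g` admits a weak section. -/
def HasWeakSection (P : PreJCat C) {E B : C} (g : E ⟶ B) : Prop :=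
  P.WeakLifting (𝟙 B) g

/-- `j : J ⟶ B` is a join morphism of `f : A ⟶ B` and `g : Cc ⟶ B`: built from an
F-factorization of `g`, a pullback, a C-factorization and a pushout. -/
def IsJoin (P : PreJCat C) {A Cc B J : C} (f : A ⟶ B) (g : Cc ⟶ B) (j : J ⟶ B) : Prop :=
  ∃ (E : C) (τ : Cc ⟶ E) (q : E ⟶ B), P.weq τ ∧ P.fib q ∧ τ ≫ q = g ∧
  ∃ (E' Z : C) (fbar : E' ⟶ E) (pbar : E' ⟶ A) (i : E' ⟶ Z) (σ : Z ⟶ E)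
    (a : A ⟶ J) (bz : Z ⟶ J),
    IsPullback fbar pbar q f ∧ P.cofib i ∧ P.weq σ ∧ i ≫ σ = fbar ∧
    IsPushout pbar i a bz ∧ a ≫ j = f ∧ bz ≫ j = σ ≫ q

/-- `IsIterJoin P p n h` : `h` is an `n`-th iterated join morphism `*ⁿ_B E ⟶ B` of `p`. -/
inductive IsIterJoin (P : PreJCat C) {E B : C} (p : E ⟶ B) : ℕ → ∀ {X : C}, (X ⟶ B) → Prop
  | zero : IsIterJoin P p 0 p
  | succ {n : ℕ} {X Y : C} {h : X ⟶ B} {h' : Y ⟶ B} :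
      IsIterJoin P p n h → P.IsJoin h p h' → IsIterJoin P p (n + 1) h'

/-- The Ganea-type sectional category of a morphism. -/
noncomputable def Gsecat (P : PreJCat C) {E B : C} (p : E ⟶ B) : ℕ∞ :=
  sInf {n : ℕ∞ | ∃ m : ℕ, n = (m : ℕ∞) ∧
    ∃ (X : C) (h : X ⟶ B), P.IsIterJoin p m h ∧ P.HasWeakSection h}

end PreJCat

/-- `p1, p2` exhibit `Pd` as a binary product of `X` and `Y`. -/
def IsBinProd {X Y Pd : C} (p1 : Pd ⟶ X) (p2 : Pd ⟶ Y) : Prop :=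
  Nonempty (IsLimit (BinaryFan.mk p1 p2))

namespace PreJCat

/-- `IsFatWedge P p n j Δ` : `j : Tⁿ(p) ⟶ B^{n+1}` is an `n`-th fat wedge morphism of `p`
together with the diagonal `Δ : B ⟶ B^{n+1}`. -/
inductive IsFatWedge (P : PreJCat C) {E B : C} (p : E ⟶ B) :
    ℕ → ∀ {T Pw : C}, (T ⟶ Pw) → (B ⟶ Pw) → Prop
  | zero : IsFatWedge P p 0 p (𝟙 B)
  | succ {n : ℕ} {T Pn : C} {j : T ⟶ Pn} {Δ : B ⟶ Pn}
      (hprev : IsFatWedge P p n j Δ)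
      {Pn1 : C} {pr1 : Pn1 ⟶ Pn} {pr2 : Pn1 ⟶ B} (hP : IsBinProd pr1 pr2)
      {TB : C} {q1 : TB ⟶ T} {q2 : TB ⟶ B} (hTB : IsBinProd q1 q2)
      {PE : C} {r1 : PE ⟶ Pn} {r2 : PE ⟶ E} (hPE : IsBinProd r1 r2)
      {jB : TB ⟶ Pn1} (hjB : jB ≫ pr1 = q1 ≫ j ∧ jB ≫ pr2 = q2)
      {pP : PE ⟶ Pn1} (hpP : pP ≫ pr1 = r1 ∧ pP ≫ pr2 = r2 ≫ p)
      {Tn1 : C} {j' : Tn1 ⟶ Pn1} (hjoin : P.IsJoin jB pP j')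
      {Δ' : B ⟶ Pn1} (hΔ : Δ' ≫ pr1 = Δ ∧ Δ' ≫ pr2 = 𝟙 B) :
      IsFatWedge P p (n + 1) j' Δ'

/-- The Whitehead-type sectional category of a morphism with e-fibrant codomain. -/
noncomputable def WsecatE (P : PreJCat C) {E B : C} (p : E ⟶ B) : ℕ∞ :=
  sInf {n : ℕ∞ | ∃ m : ℕ, n = (m : ℕ∞) ∧
    ∃ (T Pw : C) (j : T ⟶ Pw) (Δ : B ⟶ Pw), P.IsFatWedge p m j Δ ∧ P.WeakLifting Δ j}

/-- The Whitehead-type sectional category of an arbitrary morphism, via e-fibrant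
replacements of the codomain. -/
noncomputable def Wsecat (P : PreJCat C) {E B : C} (p : E ⟶ B) : ℕ∞ :=
  ⨅ (F : C) (τ : B ⟶ F) (_ : P.weq τ ∧ P.EFibrant F), P.WsecatE (p ≫ τ)

/-- A commutative square is a homotopy pullback. -/
def IsHPB (P : PreJCat C) {D A Cc B : C} (f' : D ⟶ Cc) (g' : D ⟶ A)
    (g : Cc ⟶ B) (f : A ⟶ B) : Prop :=
  f' ≫ g = g' ≫ f ∧ ∃ (E : C) (τ : Cc ⟶ E) (q : E ⟶ B), P.weq τ ∧ P.fib q ∧ τ ≫ q = g ∧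
    ∃ (Pt : C) (pr1 : Pt ⟶ E) (pr2 : Pt ⟶ A), IsPullback pr1 pr2 q f ∧
      ∃ w : D ⟶ Pt, P.weq w ∧ w ≫ pr1 = f' ≫ τ ∧ w ≫ pr2 = g'

/-- A commutative square is a homotopy pushout. -/
def IsHPO (P : PreJCat C) {A B Cc D : C} (f : A ⟶ B) (g : A ⟶ Cc)
    (i' : B ⟶ D) (j' : Cc ⟶ D) : Prop :=
  f ≫ i' = g ≫ j' ∧ ∃ (Z : C) (i : A ⟶ Z) (σ : Z ⟶ B), P.cofib i ∧ P.weq σ ∧ i ≫ σ = f ∧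
    ∃ (Q : C) (inl : Z ⟶ Q) (inr : Cc ⟶ Q), IsPushout i g inl inr ∧
      ∃ w : Q ⟶ D, P.weq w ∧ inl ≫ w = σ ≫ i' ∧ inr ≫ w = j'

/-- `A-A'-B'-B` is a weak pullback over `b : B ⟶ B'` (all objects cofibrant models). -/
def IsWeakPullback (P : PreJCat C) {A B A' B' : C}
    (f : A ⟶ B) (f' : A' ⟶ B') (b : B ⟶ B') : Prop :=
  ∃ (X : C) (τ : A' ⟶ X) (q : X ⟶ B'), P.weq τ ∧ P.fib q ∧ τ ≫ q = f' ∧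
    ∃ x : A ⟶ X, P.IsHPB x f q b

/-- `g : G ⟶ B` is an `n`-th Ganea map of `B`: the `n`-th iterated join of `0 ⟶ B`. -/
def IsGaneaMap (P : PreJCat C) (B : C) (n : ℕ) {G : C} (g : G ⟶ B) : Prop :=
  P.IsIterJoin (0 : (0 : C) ⟶ B) n g

/-- The Lusternik-Schnirelmann category of an object. -/
noncomputable def catObj (P : PreJCat C) (B : C) : ℕ∞ :=
  sInf {n : ℕ∞ | ∃ m : ℕ, n = (m : ℕ∞) ∧
    ∃ (G : C) (g : G ⟶ B), P.IsGaneaMap B m g ∧ P.HasWeakSection g}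

/-- The Lusternik-Schnirelmann category of a morphism `b : B ⟶ B'`:
least `n` such that `b` admits a weak lifting along the `n`-th Ganea map of `B'`. -/
noncomputable def catMor (P : PreJCat C) {B B' : C} (b : B ⟶ B') : ℕ∞ :=
  sInf {n : ℕ∞ | ∃ m : ℕ, n = (m : ℕ∞) ∧
    ∃ (G : C) (g : G ⟶ B'), P.IsGaneaMap B' m g ∧ P.WeakLifting b g}

/-- One step of a zigzag: a weak equivalence of morphisms in the arrow category. -/
def MorWeqStep (P : PreJCat C) (u v : Arrow C) : Prop :=
  ∃ h : u ⟶ v, P.weq h.left ∧ P.weq h.right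

/-- Two morphisms are weakly equivalent: joined by a finite zigzag of weak
equivalences of morphisms. -/
def WeaklyEquivMor (P : PreJCat C) (u v : Arrow C) : Prop :=
  Relation.EqvGen P.MorWeqStep u v

def ObjWeqStep (P : PreJCat C) (X Y : C) : Prop := ∃ f : X ⟶ Y, P.weq f

/-- Two objects are weakly equivalent: joined by a finite zigzag of weak equivalences. -/
def WeaklyEquivObj (P : PreJCat C) (X Y : C) : Prop :=
  Relation.EqvGen P.ObjWeqStep X Y

/-- The abstract topological complexity of an e-fibrant object:
the sectional category of the diagonal `B ⟶ B × B`. -/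
noncomputable def TCE (P : PreJCat C) (B : C) : ℕ∞ :=
  ⨅ (Pd : C) (p1 : Pd ⟶ B) (p2 : Pd ⟶ B) (_ : IsBinProd p1 p2)
    (Δ : B ⟶ Pd) (_ : Δ ≫ p1 = 𝟙 B ∧ Δ ≫ p2 = 𝟙 B), P.Gsecat Δ

/-- The abstract topological complexity of an arbitrary object, via e-fibrant
replacements. -/
noncomputable def TC (P : PreJCat C) (B : C) : ℕ∞ :=
  ⨅ (F : C) (τ : B ⟶ F) (_ : P.weq τ ∧ P.EFibrant F), P.TCE F

end PreJCat

variable (C)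

/-- A J-category: (J1)-(J4) together with the cube axiom (J5). -/
structure JCat extends PreJCat C where
  /-- (J5) the cube axiom: in a commutative cube whose bottom face is a homotopy
  pushout and whose vertical faces are homotopy pullbacks, the top face is a
  homotopy pushout. -/
  cube : ∀ {X00 X01 X10 X11 Y00 Y01 Y10 Y11 : C}
    {tf : X00 ⟶ X01} {tg : X00 ⟶ X10} {ti : X01 ⟶ X11} {tj : X10 ⟶ X11}
    {bf : Y00 ⟶ Y01} {bg : Y00 ⟶ Y10} {bi : Y01 ⟶ Y11} {bj : Y10 ⟶ Y11}
    {v00 : X00 ⟶ Y00} {v01 : X01 ⟶ Y01} {v10 : X10 ⟶ Y10} {v11 : X11 ⟶ Y11},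
    tf ≫ ti = tg ≫ tj →
    toPreJCat.IsHPO bf bg bi bj →
    toPreJCat.IsHPB tf v00 v01 bf →
    toPreJCat.IsHPB tg v00 v10 bg →
    toPreJCat.IsHPB ti v01 v11 bi →
    toPreJCat.IsHPB tj v10 v11 bj →
    toPreJCat.IsHPO tf tg ti tj

variable {C}

/-- A modelization functor: preserves weak equivalences, homotopy pullbacks and
homotopy pushouts. -/
structure ModelizationFunctor {D : Type u'} [Category.{v'} D] [HasZeroObject D]
    [HasZeroMorphisms D] (P : PreJCat C) (Q : PreJCat D) where
  F : C ⥤ D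
  map_weq : ∀ {X Y : C} (f : X ⟶ Y), P.weq f → Q.weq (F.map f)
  map_hpb : ∀ {Dd A Cc B : C} {f' : Dd ⟶ Cc} {g' : Dd ⟶ A} {g : Cc ⟶ B} {f : A ⟶ B},
    P.IsHPB f' g' g f → Q.IsHPB (F.map f') (F.map g') (F.map g) (F.map f)
  map_hpo : ∀ {A B Cc Dd : C} {f : A ⟶ B} {g : A ⟶ Cc} {i' : B ⟶ Dd} {j' : Cc ⟶ Dd},
    P.IsHPO f g i' j' → Q.IsHPO (F.map f) (F.map g) (F.map i') (F.map j')

/-! ### Auxiliary machinery for the invariance of `Gsecat` -/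

namespace GsecatAux

open PreJCat

variable {C : Type u} [Category.{v} C] [HasZeroObject C] [HasZeroMorphisms C]

section Basic

variable (P : PreJCat C)

lemma weq_of_isIso {X Y : C} (f : X ⟶ Y) [IsIso f] : P.weq f :=
  (P.iso_triv_fib f inferInstance).2

lemma weq_id (X : C) : P.weq (𝟙 X) := weq_of_isIso P (𝟙 X)

lemma cofib_of_isIso {X Y : C} (f : X ⟶ Y) [IsIso f] : P.cofib f :=
  (P.iso_triv_cofib f inferInstance).1

lemma fib_of_isIso {X Y : C} (f : X ⟶ Y) [IsIso f] : P.fib f :=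
  (P.iso_triv_fib f inferInstance).1

/-- The leg of an arbitrary pushout square parallel to a cofibration is a cofibration. -/
lemma cofib_inr_of_isPushout {A X Y Q : C} {i : A ⟶ X} {g : A ⟶ Y} {inl : X ⟶ Q}
    {inr : Y ⟶ Q} (hpo : IsPushout i g inl inr) (hi : P.cofib i) : P.cofib inr := by
  obtain ⟨Q₀, inl₀, inr₀, hpo₀, hc₀⟩ := P.po_exists i g hi
  have : inr = inr₀ ≫ (hpo₀.isoIsPushout _ _ hpo).hom := by
    rw [IsPushout.inr_isoIsPushout_hom]
  rw [this]
  exact P.cofib_comp hc₀ (cofib_of_isIso P _)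

/-- The leg of an arbitrary pullback square parallel to a fibration is a fibration. -/
lemma fib_snd_of_isPullback {E B B' Pt : C} {p : E ⟶ B} {f : B' ⟶ B} {fst : Pt ⟶ E}
    {snd : Pt ⟶ B'} (hpb : IsPullback fst snd p f) (hp : P.fib p) : P.fib snd := by
  obtain ⟨P₀, fb₀, pb₀, hpb₀, hf₀⟩ := P.pb_exists p f hp
  have : snd = (hpb.isoIsPullback _ _ hpb₀).hom ≫ pb₀ := by
    rw [IsPullback.isoIsPullback_hom_snd]
  rw [this]
  exact P.fib_comp (fib_of_isIso P _) hf₀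

/-- KEY: a fibration receiving a map whose composite to the base is a weak
equivalence admits a section (all objects being cofibrant models). -/
lemma sec_of_weq_comp (hc : ∀ X : C, P.CofModel X) {Z B X : C} {q : Z ⟶ B}
    (hq : P.fib q) (v : X ⟶ Z) (hw : P.weq (v ≫ q)) : ∃ s : B ⟶ Z, s ≫ q = 𝟙 B := by
  obtain ⟨N, τ, ρ, hτ, hρ, hfac⟩ := P.F_fac v
  have h1 : P.fib (ρ ≫ q) := P.fib_comp hρ hq
  have h2 : P.weq (ρ ≫ q) := by
    refine P.weq_of_comp_right hτ ?_
    rw [← Category.assoc, hfac]; exact hw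
  obtain ⟨s, hs⟩ := hc B (ρ ≫ q) h1 h2
  exact ⟨s ≫ ρ, by rw [Category.assoc]; exact hs⟩

end Basic

section Sections

variable (P : PreJCat C)

/-- Transfer a weak section backwards along a weak-equivalence square. -/
lemma hasWeakSection_of_weqSq {X X' B B' : C} {j : X ⟶ B} {j' : X' ⟶ B'}
    (u : X ⟶ X') (β : B ⟶ B') (hu : P.weq u) (hβ : P.weq β) (hsq : u ≫ j' = j ≫ β)
    (h' : P.HasWeakSection j') : P.HasWeakSection j := by
  obtain ⟨Z', τ', q', hτ', hq', hfac', s', hs'⟩ := h'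
  obtain ⟨Pb, fb, qb, hpb, hqb⟩ := P.pb_exists q' β hq'
  have hfb : P.weq fb := (P.pb_weq hq' hpb).1 hβ
  have hw1 : (u ≫ τ') ≫ q' = j ≫ β := by rw [Category.assoc, hfac', hsq]
  have hw2 : (β ≫ s') ≫ q' = 𝟙 B ≫ β := by
    rw [Category.assoc, hs', Category.comp_id, Category.id_comp]
  refine ⟨Pb, hpb.lift (u ≫ τ') j hw1, qb, ?_, hqb, hpb.lift_snd _ _ _,
    hpb.lift (β ≫ s') (𝟙 B) hw2, hpb.lift_snd _ _ _⟩
  refine P.weq_of_comp_left hfb ?_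
  rw [hpb.lift_fst]
  exact P.weq_comp hu hτ'

/-- Transfer a weak section forwards along a weak-equivalence square
(uses that all objects are cofibrant models). -/
lemma hasWeakSection_of_weqSq' (hc : ∀ X : C, P.CofModel X)
    {X X' B B' : C} {j : X ⟶ B} {j' : X' ⟶ B'}
    (u : X ⟶ X') (β : B ⟶ B') (hu : P.weq u) (hβ : P.weq β) (hsq : u ≫ j' = j ≫ β)
    (h : P.HasWeakSection j) : P.HasWeakSection j' := by
  obtain ⟨Z₁, τ₁, q₁, hτ₁, hq₁, hfac₁, s₁, hs₁⟩ := h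
  obtain ⟨Z', τ', q', hτ', hq', hfac'⟩ := P.F_fac j'
  obtain ⟨Pb, fb, qb, hpb, hqb⟩ := P.pb_exists q' β hq'
  have hfb : P.weq fb := (P.pb_weq hq' hpb).1 hβ
  have hw1 : (u ≫ τ') ≫ q' = j ≫ β := by rw [Category.assoc, hfac', hsq]
  set w := hpb.lift (u ≫ τ') j hw1 with hwdef
  have hwqb : w ≫ qb = j := hpb.lift_snd _ _ _
  -- a section of `qb`, transferred from the section of `q₁`
  obtain ⟨T, fbT, pbT, hpbT, hfibT⟩ := P.pb_exists qb q₁ hqb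
  set y := hpbT.lift w τ₁ (by rw [hwqb, hfac₁]) with hydef
  obtain ⟨M, τy, ρ, hτy, hρ, hfacy⟩ := P.F_fac y
  have h2 : P.weq (ρ ≫ pbT) := by
    refine P.weq_of_comp_right hτy ?_
    rw [← Category.assoc, hfacy, hpbT.lift_snd]
    exact hτ₁
  obtain ⟨t, ht⟩ := hc Z₁ (ρ ≫ pbT) (P.fib_comp hρ hfibT) h2
  have hsbar : (s₁ ≫ t ≫ ρ ≫ fbT) ≫ qb = 𝟙 B := by
    have hw := hpbT.w
    calc (s₁ ≫ t ≫ ρ ≫ fbT) ≫ qb = s₁ ≫ t ≫ ρ ≫ fbT ≫ qb := by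
          simp only [Category.assoc]
      _ = s₁ ≫ t ≫ ρ ≫ pbT ≫ q₁ := by rw [hw]
      _ = s₁ ≫ (t ≫ (ρ ≫ pbT)) ≫ q₁ := by simp only [Category.assoc]
      _ = s₁ ≫ q₁ := by rw [ht, Category.id_comp]
      _ = 𝟙 B := hs₁
  -- KEY lemma applied to `q'`
  have hvq : P.weq (((s₁ ≫ t ≫ ρ ≫ fbT) ≫ fb) ≫ q') := by
    have : ((s₁ ≫ t ≫ ρ ≫ fbT) ≫ fb) ≫ q' = ((s₁ ≫ t ≫ ρ ≫ fbT) ≫ qb) ≫ β := by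
      simp only [Category.assoc, hpb.w]
    rw [this, hsbar, Category.id_comp]
    exact hβ
  obtain ⟨s', hs'⟩ := sec_of_weq_comp P hc hq' _ hvq
  exact ⟨Z', τ', q', hτ', hq', hfac', s', hs'⟩

end Sections

end GsecatAux

namespace GsecatAux

set_option linter.unusedSectionVars false
set_option linter.unusedVariables false

variable {C : Type u} [Category.{v} C] [HasZeroObject C] [HasZeroMorphisms C]
variable (P : PreJCat C)

/-- Comparison of two F-factorizations of the same morphism: there is a weak
equivalence between the middle objects strictly over the base. -/
lemma ffCompare (hc : ∀ X : C, P.CofModel X) {Cc B E₁ E₂ : C}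
    {τ₁ : Cc ⟶ E₁} {q₁ : E₁ ⟶ B} {τ₂ : Cc ⟶ E₂} {q₂ : E₂ ⟶ B}
    (hτ₁ : P.weq τ₁) (hq₁ : P.fib q₁) (hτ₂ : P.weq τ₂) (hq₂ : P.fib q₂)
    (hg : τ₁ ≫ q₁ = τ₂ ≫ q₂) :
    ∃ θ : E₁ ⟶ E₂, P.weq θ ∧ θ ≫ q₂ = q₁ := by
  obtain ⟨X₃, fb₃, pb₃, hpb₃, hfib₃⟩ := P.pb_exists q₂ q₁ hq₂
  set τ₃ := hpb₃.lift τ₂ τ₁ hg.symm with hτ₃def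
  obtain ⟨M, κ, ρ, hκ, hρ, hfacρ⟩ := P.F_fac τ₃
  have h2 : P.weq (ρ ≫ pb₃) := by
    refine P.weq_of_comp_right hκ ?_
    rw [← Category.assoc, hfacρ, hpb₃.lift_snd]
    exact hτ₁
  obtain ⟨s₁, hs₁⟩ := hc E₁ (ρ ≫ pb₃) (P.fib_comp hρ hfib₃) h2
  have hρfb : P.weq (ρ ≫ fb₃) := by
    refine P.weq_of_comp_right hκ ?_
    rw [← Category.assoc, hfacρ, hpb₃.lift_fst]
    exact hτ₂
  have hs₁w : P.weq s₁ := P.weq_of_comp_left h2 (by rw [hs₁]; exact weq_id P E₁)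
  refine ⟨s₁ ≫ ρ ≫ fb₃, ?_, ?_⟩
  · rw [show s₁ ≫ ρ ≫ fb₃ = s₁ ≫ (ρ ≫ fb₃) by simp only [Category.assoc]]
    exact P.weq_comp hs₁w hρfb
  · calc (s₁ ≫ ρ ≫ fb₃) ≫ q₂ = s₁ ≫ ρ ≫ fb₃ ≫ q₂ := by simp only [Category.assoc]
      _ = s₁ ≫ ρ ≫ pb₃ ≫ q₁ := by rw [hpb₃.w]
      _ = (s₁ ≫ (ρ ≫ pb₃)) ≫ q₁ := by simp only [Category.assoc]
      _ = q₁ := by rw [hs₁, Category.id_comp]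

/-- Ken Brown style lemma: a weak equivalence between fibrations over `B`
pulls back along any morphism to a weak equivalence. -/
lemma brownPullback {Z₁ Z₂ B X : C} {q₁ : Z₁ ⟶ B} {q₂ : Z₂ ⟶ B}
    (hq₁ : P.fib q₁) (hq₂ : P.fib q₂) {θ : Z₁ ⟶ Z₂} (hθ : P.weq θ)
    (hθq : θ ≫ q₂ = q₁) {h : X ⟶ B} {E₁ E₂ : C}
    {f₁ : E₁ ⟶ Z₁} {p₁ : E₁ ⟶ X} {f₂ : E₂ ⟶ Z₂} {p₂ : E₂ ⟶ X}
    (hpb₁ : IsPullback f₁ p₁ q₁ h) (hpb₂ : IsPullback f₂ p₂ q₂ h) :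
    ∃ eh : E₁ ⟶ E₂, P.weq eh ∧ eh ≫ f₂ = f₁ ≫ θ ∧ eh ≫ p₂ = p₁ := by
  obtain ⟨W, fbW, pbW, hpbW, hfibW⟩ := P.pb_exists q₂ q₁ hq₂
  have hfibfbW : P.fib fbW := fib_snd_of_isPullback P hpbW.flip hq₁
  set γ := hpbW.lift θ (𝟙 Z₁) (by rw [hθq, Category.id_comp]) with hγdef
  obtain ⟨M, κ, ρ, hκ, hρ, hfacγ⟩ := P.F_fac γ
  set t := ρ ≫ pbW with htdef
  set r := ρ ≫ fbW with hrdef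
  have hfibt : P.fib t := P.fib_comp hρ hfibW
  have hfibr : P.fib r := P.fib_comp hρ hfibfbW
  have hκt : κ ≫ t = 𝟙 Z₁ := by
    rw [htdef, ← Category.assoc, hfacγ, hpbW.lift_snd]
  have hκr : κ ≫ r = θ := by
    rw [hrdef, ← Category.assoc, hfacγ, hpbW.lift_fst]
  have hweqt : P.weq t := P.weq_of_comp_right hκ (by rw [hκt]; exact weq_id P Z₁)
  have hweqr : P.weq r := P.weq_of_comp_right hκ (by rw [hκr]; exact hθ)
  have hrq : r ≫ q₂ = t ≫ q₁ := by
    rw [hrdef, htdef, Category.assoc, Category.assoc, hpbW.w]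
  have hqM : P.fib (t ≫ q₁) := P.fib_comp hfibt hq₁
  obtain ⟨EM, fM, pM, hpbM, _⟩ := P.pb_exists (t ≫ q₁) h hqM
  -- the two trivial-fibration base extensions
  set rh := hpb₂.lift (fM ≫ r) pM
    (by rw [Category.assoc, hrq, hpbM.w]) with hrhdef
  have hrh1 : rh ≫ f₂ = fM ≫ r := hpb₂.lift_fst _ _ _
  have hrh2 : rh ≫ p₂ = pM := hpb₂.lift_snd _ _ _
  have hsqr : IsPullback fM rh r f₂ := by
    refine IsPullback.of_bot ?_ hrh1.symm hpb₂
    rw [hrh2, hrq]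
    exact hpbM
  have hweqrh : P.weq rh := (P.pb_weq hfibr hsqr).2 hweqr
  set th := hpb₁.lift (fM ≫ t) pM
    (by rw [Category.assoc, hpbM.w]) with hthdef
  have hth1 : th ≫ f₁ = fM ≫ t := hpb₁.lift_fst _ _ _
  have hth2 : th ≫ p₁ = pM := hpb₁.lift_snd _ _ _
  have hsqt : IsPullback fM th t f₁ := by
    refine IsPullback.of_bot ?_ hth1.symm hpb₁
    rw [hth2]
    exact hpbM
  have hweqth : P.weq th := (P.pb_weq hfibt hsqt).2 hweqt
  -- the section-like lift
  set κh := hpbM.lift (f₁ ≫ κ) p₁ (by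
    calc (f₁ ≫ κ) ≫ t ≫ q₁ = f₁ ≫ (κ ≫ t) ≫ q₁ := by simp only [Category.assoc]
      _ = f₁ ≫ q₁ := by rw [hκt, Category.id_comp]
      _ = p₁ ≫ h := hpb₁.w) with hκhdef
  have hκh1 : κh ≫ fM = f₁ ≫ κ := hpbM.lift_fst _ _ _
  have hκh2 : κh ≫ pM = p₁ := hpbM.lift_snd _ _ _
  have hκhth : κh ≫ th = 𝟙 E₁ := by
    refine hpb₁.hom_ext ?_ ?_
    · rw [Category.assoc, hth1, ← Category.assoc, hκh1, Category.assoc, hκt,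
        Category.comp_id, Category.id_comp]
    · rw [Category.assoc, hth2, hκh2, Category.id_comp]
  have hweqκh : P.weq κh := P.weq_of_comp_left hweqth (by rw [hκhth]; exact weq_id P E₁)
  refine ⟨κh ≫ rh, P.weq_comp hweqκh hweqrh, ?_, ?_⟩
  · rw [Category.assoc, hrh1, ← Category.assoc, hκh1, Category.assoc, hκr]
  · rw [Category.assoc, hrh2, hκh2]

/-- Comparison of pullbacks across a base-change square along `β`. -/
lemma stepTwoLift {Eg' B' B P₀ X X' E₀ E₀' : C} {q' : Eg' ⟶ B'} (hq' : P.fib q')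
    {β : B ⟶ B'} {fb : P₀ ⟶ Eg'} {qb : P₀ ⟶ B} (hsq0 : IsPullback fb qb q' β)
    {h : X ⟶ B} {h' : X' ⟶ B'} {u : X ⟶ X'} (hu : P.weq u) (huh : u ≫ h' = h ≫ β)
    {fbar'' : E₀ ⟶ P₀} {pbar'' : E₀ ⟶ X} (hpbd : IsPullback fbar'' pbar'' qb h)
    {fbar' : E₀' ⟶ Eg'} {pbar' : E₀' ⟶ X'} (hpbu : IsPullback fbar' pbar' q' h') :
    ∃ eh : E₀ ⟶ E₀', P.weq eh ∧ eh ≫ fbar' = fbar'' ≫ fb ∧ eh ≫ pbar' = pbar'' ≫ u := by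
  have big : IsPullback (fbar'' ≫ fb) pbar'' q' (h ≫ β) := hpbd.paste_horiz hsq0
  rw [← huh] at big
  have hw : (fbar'' ≫ fb) ≫ q' = (pbar'' ≫ u) ≫ h' := by
    rw [big.w, Category.assoc]
  set eh := hpbu.lift (fbar'' ≫ fb) (pbar'' ≫ u) hw with hehdef
  have he1 : eh ≫ fbar' = fbar'' ≫ fb := hpbu.lift_fst _ _ _
  have he2 : eh ≫ pbar' = pbar'' ≫ u := hpbu.lift_snd _ _ _
  have hsql : IsPullback eh pbar'' pbar' u := by
    refine IsPullback.of_right ?_ he2 hpbu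
    rw [he1]
    exact big
  have hfibp' : P.fib pbar' := fib_snd_of_isPullback P hpbu hq'
  exact ⟨eh, (P.pb_weq hfibp' hsql).1 hu, he1, he2⟩

end GsecatAux
namespace GsecatAux

variable {C : Type u} [Category.{v} C] [HasZeroObject C] [HasZeroMorphisms C]

/-- A pair of morphisms with common codomain. -/
structure PO (C : Type u) [Category.{v} C] where
  {X : C}
  {B : C}
  {E : C}
  h : X ⟶ B
  p : E ⟶ B

variable (P : PreJCat C)

/-- One step of a zigzag of pairs. -/
def pRel (a b : PO C) : Prop :=
  ∃ (u : a.X ⟶ b.X) (v : a.E ⟶ b.E) (β : a.B ⟶ b.B),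
    P.weq u ∧ P.weq v ∧ P.weq β ∧ u ≫ b.h = a.h ≫ β ∧ v ≫ b.p = a.p ≫ β

/-- Zigzags of weak equivalences of pairs. -/
def pZig : PO C → PO C → Prop := Relation.EqvGen (pRel P)

lemma pZig.rel {a b : PO C} (h : pRel P a b) : pZig P a b := Relation.EqvGen.rel _ _ h

lemma pZig.refl (a : PO C) : pZig P a a := Relation.EqvGen.refl a

lemma pZig.symm {a b : PO C} (h : pZig P a b) : pZig P b a := Relation.EqvGen.symm _ _ h

lemma pZig.trans {a b c : PO C} (h : pZig P a b) (h' : pZig P b c) : pZig P a c :=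
  Relation.EqvGen.trans _ _ _ h h'

/-- A cospan of weak equivalences over the same base yields a zigzag of pairs. -/
lemma pzig_of_cospan {J₁ J₂ M B Cp : C} {j₁ : J₁ ⟶ B} {j₂ : J₂ ⟶ B} {jM : M ⟶ B}
    {pp : Cp ⟶ B} (w₁ : J₁ ⟶ M) (w₂ : J₂ ⟶ M) (hw₁ : P.weq w₁) (hw₂ : P.weq w₂)
    (e₁ : w₁ ≫ jM = j₁) (e₂ : w₂ ≫ jM = j₂) :
    pZig P ⟨j₁, pp⟩ ⟨j₂, pp⟩ := by
  have s1 : pRel P ⟨j₁, pp⟩ ⟨jM, pp⟩ := ⟨w₁, 𝟙 Cp, 𝟙 B, hw₁, weq_id P Cp, weq_id P B,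
    by rw [e₁, Category.comp_id], by rw [Category.id_comp, Category.comp_id]⟩
  have s2 : pRel P ⟨j₂, pp⟩ ⟨jM, pp⟩ := ⟨w₂, 𝟙 Cp, 𝟙 B, hw₂, weq_id P Cp, weq_id P B,
    by rw [e₂, Category.comp_id], by rw [Category.id_comp, Category.comp_id]⟩
  exact pZig.trans P (pZig.rel P s1) (pZig.symm P (pZig.rel P s2))

/-- Comparison of pushouts along weakly equivalent cofibrations
("problem P"): a cospan of weak equivalences over the base. -/
lemma pzigP {E₀ A ZA Z₃ B : C} {pbar : E₀ ⟶ A} {iA : E₀ ⟶ ZA} {i₃ : E₀ ⟶ Z₃}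
    (hiA : P.cofib iA) (hi₃ : P.cofib i₃) {z : ZA ⟶ Z₃} (hz : P.weq z)
    (hiz : iA ≫ z = i₃) {y₃ : Z₃ ⟶ B} {f₀ : A ⟶ B} (hcoc : pbar ≫ f₀ = i₃ ≫ y₃)
    {JA : C} {aA : A ⟶ JA} {bA : ZA ⟶ JA} (hpoA : IsPushout pbar iA aA bA)
    {J₃ : C} {a₃ : A ⟶ J₃} {b₃ : Z₃ ⟶ J₃} (hpo₃ : IsPushout pbar i₃ a₃ b₃)
    {jA : JA ⟶ B} (haA : aA ≫ jA = f₀) (hbA : bA ≫ jA = z ≫ y₃)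
    {j₃ : J₃ ⟶ B} (ha₃ : a₃ ≫ j₃ = f₀) (hb₃ : b₃ ≫ j₃ = y₃) :
    ∃ (M : C) (jM : M ⟶ B) (wA : JA ⟶ M) (w₃ : J₃ ⟶ M),
      P.weq wA ∧ P.weq w₃ ∧ wA ≫ jM = jA ∧ w₃ ≫ jM = j₃ := by
  obtain ⟨V, inlV, inrV, hpoV, hcr⟩ := P.po_exists iA i₃ hiA
  have hcl : P.cofib inlV := cofib_inr_of_isPushout P hpoV.flip hi₃
  set δ := hpoV.desc z (𝟙 Z₃) (by rw [hiz, Category.comp_id]) with hδdef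
  have hδ1 : inlV ≫ δ = z := hpoV.inl_desc _ _ _
  have hδ2 : inrV ≫ δ = 𝟙 Z₃ := hpoV.inr_desc _ _ _
  obtain ⟨M₀, iδ, σδ, hciδ, hwσδ, hfacδ⟩ := P.C_fac δ
  set c := inlV ≫ iδ with hcdef
  have hcσ : c ≫ σδ = z := by rw [hcdef, Category.assoc, hfacδ, hδ1]
  have hwc : P.weq c := P.weq_of_comp_left hwσδ (by rw [hcσ]; exact hz)
  have hccof : P.cofib c := P.cofib_comp hcl hciδ
  set t := inrV ≫ iδ with htdef
  have htσ : t ≫ σδ = 𝟙 Z₃ := by rw [htdef, Category.assoc, hfacδ, hδ2]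
  have hwt : P.weq t := P.weq_of_comp_left hwσδ (by rw [htσ]; exact weq_id P Z₃)
  have htcof : P.cofib t := P.cofib_comp hcr hciδ
  have hident : i₃ ≫ t = iA ≫ c := by
    rw [htdef, hcdef, ← Category.assoc, ← Category.assoc, hpoV.w]
  have hcofiM : P.cofib (iA ≫ c) := P.cofib_comp hiA hccof
  obtain ⟨QM, bM, aM, hpoM, _⟩ := P.po_exists (iA ≫ c) pbar hcofiM
  have hpoMf : IsPushout pbar (iA ≫ c) aM bM := hpoM.flip
  have hjmw : pbar ≫ f₀ = (iA ≫ c) ≫ σδ ≫ y₃ := by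
    calc pbar ≫ f₀ = i₃ ≫ y₃ := hcoc
      _ = i₃ ≫ (t ≫ σδ) ≫ y₃ := by rw [htσ, Category.id_comp]
      _ = (i₃ ≫ t) ≫ σδ ≫ y₃ := by simp only [Category.assoc]
      _ = (iA ≫ c) ≫ σδ ≫ y₃ := by rw [hident]
  set jM := hpoMf.desc f₀ (σδ ≫ y₃) hjmw with hjMdef
  have hjm1 : aM ≫ jM = f₀ := hpoMf.inl_desc _ _ _
  have hjm2 : bM ≫ jM = σδ ≫ y₃ := hpoMf.inr_desc _ _ _
  -- the map from JA
  have hwAw : pbar ≫ aM = iA ≫ c ≫ bM := by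
    rw [hpoMf.w, Category.assoc]
  set wA := hpoA.desc aM (c ≫ bM) hwAw with hwAdef
  have hwA1 : aA ≫ wA = aM := hpoA.inl_desc _ _ _
  have hwA2 : bA ≫ wA = c ≫ bM := hpoA.inr_desc _ _ _
  have hScA : IsPushout c bA bM wA := by
    refine IsPushout.of_left ?_ hwA2.symm hpoA.flip
    rw [hwA1]
    exact hpoM
  have hweqwA : P.weq wA := (P.po_weq hccof hScA).2 hwc
  have hwAjM : wA ≫ jM = jA := by
    refine hpoA.hom_ext ?_ ?_
    · rw [← Category.assoc, hwA1, hjm1, haA]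
    · calc bA ≫ wA ≫ jM = (bA ≫ wA) ≫ jM := by rw [Category.assoc]
        _ = (c ≫ bM) ≫ jM := by rw [hwA2]
        _ = c ≫ bM ≫ jM := by rw [Category.assoc]
        _ = c ≫ σδ ≫ y₃ := by rw [hjm2]
        _ = (c ≫ σδ) ≫ y₃ := (Category.assoc c σδ y₃).symm
        _ = z ≫ y₃ := by rw [hcσ]
        _ = bA ≫ jA := hbA.symm
  -- the map from J₃
  have hw₃w : pbar ≫ aM = i₃ ≫ t ≫ bM := by
    calc pbar ≫ aM = (iA ≫ c) ≫ bM := hpoMf.w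
      _ = (i₃ ≫ t) ≫ bM := by rw [hident]
      _ = i₃ ≫ t ≫ bM := by rw [Category.assoc]
  set w₃ := hpo₃.desc aM (t ≫ bM) hw₃w with hw₃def
  have hw₃1 : a₃ ≫ w₃ = aM := hpo₃.inl_desc _ _ _
  have hw₃2 : b₃ ≫ w₃ = t ≫ bM := hpo₃.inr_desc _ _ _
  have hSc₃ : IsPushout t b₃ bM w₃ := by
    refine IsPushout.of_left ?_ hw₃2.symm hpo₃.flip
    rw [hw₃1, hident]
    exact hpoM
  have hweqw₃ : P.weq w₃ := (P.po_weq htcof hSc₃).2 hwt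
  have hw₃jM : w₃ ≫ jM = j₃ := by
    refine hpo₃.hom_ext ?_ ?_
    · rw [← Category.assoc, hw₃1, hjm1, ha₃]
    · calc b₃ ≫ w₃ ≫ jM = (b₃ ≫ w₃) ≫ jM := by rw [Category.assoc]
        _ = (t ≫ bM) ≫ jM := by rw [hw₃2]
        _ = t ≫ bM ≫ jM := by rw [Category.assoc]
        _ = t ≫ σδ ≫ y₃ := by rw [hjm2]
        _ = (t ≫ σδ) ≫ y₃ := (Category.assoc t σδ y₃).symm
        _ = y₃ := by rw [htσ, Category.id_comp]
        _ = b₃ ≫ j₃ := hb₃.symm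
  exact ⟨QM, jM, wA, w₃, hweqwA, hweqw₃, hwAjM, hw₃jM⟩

/-- Independence of the join from the chosen C-factorization and pushout:
two joins built over the same pullback datum are zigzag equivalent. -/
lemma corep {E₀ A Eg B Cp : C} {pbar : E₀ ⟶ A} {s : E₀ ⟶ Eg} {q : Eg ⟶ B}
    {f₀ : A ⟶ B} (hcoc : pbar ≫ f₀ = s ≫ q) (pp : Cp ⟶ B)
    {Z₁ : C} {i₁ : E₀ ⟶ Z₁} {σ₁ : Z₁ ⟶ Eg} (hi₁ : P.cofib i₁) (hσ₁ : P.weq σ₁)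
    (hf₁ : i₁ ≫ σ₁ = s)
    {Z₂ : C} {i₂ : E₀ ⟶ Z₂} {σ₂ : Z₂ ⟶ Eg} (hi₂ : P.cofib i₂) (hσ₂ : P.weq σ₂)
    (hf₂ : i₂ ≫ σ₂ = s)
    {J₁ : C} {a₁ : A ⟶ J₁} {b₁ : Z₁ ⟶ J₁} (hpo₁ : IsPushout pbar i₁ a₁ b₁)
    {J₂ : C} {a₂ : A ⟶ J₂} {b₂ : Z₂ ⟶ J₂} (hpo₂ : IsPushout pbar i₂ a₂ b₂)
    {j₁ : J₁ ⟶ B} (ha₁ : a₁ ≫ j₁ = f₀) (hb₁ : b₁ ≫ j₁ = σ₁ ≫ q)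
    {j₂ : J₂ ⟶ B} (ha₂ : a₂ ≫ j₂ = f₀) (hb₂ : b₂ ≫ j₂ = σ₂ ≫ q) :
    pZig P ⟨j₁, pp⟩ ⟨j₂, pp⟩ := by
  obtain ⟨V, l1, l2, hpoV, hc2⟩ := P.po_exists i₁ i₂ hi₁
  have hc1 : P.cofib l1 := cofib_inr_of_isPushout P hpoV.flip hi₂
  set σV := hpoV.desc σ₁ σ₂ (by rw [hf₁, hf₂]) with hσVdef
  have hσV1 : l1 ≫ σV = σ₁ := hpoV.inl_desc _ _ _
  have hσV2 : l2 ≫ σV = σ₂ := hpoV.inr_desc _ _ _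
  obtain ⟨Z₃, iV, σ₃, hciV, hwσ₃, hfacV⟩ := P.C_fac σV
  set z₁ := l1 ≫ iV with hz₁def
  have hz₁σ : z₁ ≫ σ₃ = σ₁ := by rw [hz₁def, Category.assoc, hfacV, hσV1]
  have hwz₁ : P.weq z₁ := P.weq_of_comp_left hwσ₃ (by rw [hz₁σ]; exact hσ₁)
  set z₂ := l2 ≫ iV with hz₂def
  have hz₂σ : z₂ ≫ σ₃ = σ₂ := by rw [hz₂def, Category.assoc, hfacV, hσV2]
  have hwz₂ : P.weq z₂ := P.weq_of_comp_left hwσ₃ (by rw [hz₂σ]; exact hσ₂)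
  have hiz₁ : i₁ ≫ z₁ = i₁ ≫ z₁ := rfl
  have hiz₂ : i₂ ≫ z₂ = i₁ ≫ z₁ := by
    rw [hz₁def, hz₂def, ← Category.assoc, ← Category.assoc, hpoV.w]
  have hcofi₃ : P.cofib (i₁ ≫ z₁) := P.cofib_comp hi₁ (P.cofib_comp hc1 hciV)
  obtain ⟨J₃, b₃, a₃, hpo₃, _⟩ := P.po_exists (i₁ ≫ z₁) pbar hcofi₃
  have hpo₃f : IsPushout pbar (i₁ ≫ z₁) a₃ b₃ := hpo₃.flip
  have hj₃w : pbar ≫ f₀ = (i₁ ≫ z₁) ≫ σ₃ ≫ q := by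
    calc pbar ≫ f₀ = s ≫ q := hcoc
      _ = (i₁ ≫ σ₁) ≫ q := by rw [hf₁]
      _ = (i₁ ≫ z₁ ≫ σ₃) ≫ q := by rw [hz₁σ]
      _ = (i₁ ≫ z₁) ≫ σ₃ ≫ q := by simp only [Category.assoc]
  set j₃ := hpo₃f.desc f₀ (σ₃ ≫ q) hj₃w with hj₃def
  have hja₃ : a₃ ≫ j₃ = f₀ := hpo₃f.inl_desc _ _ _
  have hjb₃ : b₃ ≫ j₃ = σ₃ ≫ q := hpo₃f.inr_desc _ _ _
  have hcoc' : pbar ≫ f₀ = (i₁ ≫ z₁) ≫ (σ₃ ≫ q) := hj₃w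
  obtain ⟨M₁, jM₁, wA₁, w₃₁, hwA₁, hw₃₁, e₁, e₃₁⟩ :=
    pzigP P hi₁ hcofi₃ hwz₁ rfl hcoc' hpo₁ hpo₃f ha₁
      (by rw [hb₁, ← hz₁σ, Category.assoc]) hja₃ hjb₃
  obtain ⟨M₂, jM₂, wA₂, w₃₂, hwA₂, hw₃₂, e₂, e₃₂⟩ :=
    pzigP P hi₂ hcofi₃ hwz₂ hiz₂ hcoc' hpo₂ hpo₃f ha₂
      (by rw [hb₂, ← hz₂σ, Category.assoc]) hja₃ hjb₃
  have z1 : pZig P ⟨j₁, pp⟩ ⟨j₃, pp⟩ := pzig_of_cospan P wA₁ w₃₁ hwA₁ hw₃₁ e₁ e₃₁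
  have z2 : pZig P ⟨j₂, pp⟩ ⟨j₃, pp⟩ := pzig_of_cospan P wA₂ w₃₂ hwA₂ hw₃₂ e₂ e₃₂
  exact pZig.trans P z1 (pZig.symm P z2)

end GsecatAux
namespace GsecatAux

variable {C : Type u} [Category.{v} C] [HasZeroObject C] [HasZeroMorphisms C]
variable (P : PreJCat C)

/-- The central construction: from a join presentation of `(h, p)` downstairs and
compatible partial data upstairs, build a join of `(h', p')` upstairs together with
a weak equivalence between the join objects strictly over `β`. -/
lemma buildCore {X B X' B' : C} {h : X ⟶ B} {h' : X' ⟶ B'}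
    {u : X ⟶ X'} {β : B ⟶ B'} (hu : P.weq u) (huh : u ≫ h' = h ≫ β)
    -- downstairs join data
    {Pg : C} {qb : Pg ⟶ B} (hqb : P.fib qb)
    {E₀ : C} {fbar'' : E₀ ⟶ Pg} {pbar'' : E₀ ⟶ X} (hpbd : IsPullback fbar'' pbar'' qb h)
    {Zt : C} {i'' : E₀ ⟶ Zt} {σt : Zt ⟶ Pg} (hi'' : P.cofib i'') (hσt : P.weq σt)
    (hiσd : i'' ≫ σt = fbar'')
    {J₀ : C} {a'' : X ⟶ J₀} {bz'' : Zt ⟶ J₀} (hpod : IsPushout pbar'' i'' a'' bz'')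
    {j'' : J₀ ⟶ B} (haj : a'' ≫ j'' = h) (hbj : bz'' ≫ j'' = σt ≫ qb)
    -- upstairs partial data
    {Eg' : C} {q' : Eg' ⟶ B'} (hq' : P.fib q')
    {E₀' : C} {fbar' : E₀' ⟶ Eg'} {pbar' : E₀' ⟶ X'} (hpbu : IsPullback fbar' pbar' q' h')
    {fb : Pg ⟶ Eg'} (hfb : P.weq fb) (hfbq : fb ≫ q' = qb ≫ β)
    {eh : E₀ ⟶ E₀'} (hweh : P.weq eh) (hehf : eh ≫ fbar' = fbar'' ≫ fb)
    (hehp : eh ≫ pbar' = pbar'' ≫ u) :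
    ∃ (Q J' : C) (io : E₀' ⟶ Q) (σo : Q ⟶ Eg') (ao : X' ⟶ J') (bo : Q ⟶ J')
      (j' : J' ⟶ B') (w : J₀ ⟶ J'),
      P.cofib io ∧ P.weq σo ∧ io ≫ σo = fbar' ∧ IsPushout pbar' io ao bo ∧
      ao ≫ j' = h' ∧ bo ≫ j' = σo ≫ q' ∧ P.weq w ∧ w ≫ j' = j'' ≫ β := by
  -- push the downstairs C-factorization upstairs
  obtain ⟨Q, zh, io, hpoQ, hio⟩ := P.po_exists i'' eh hi''
  have hzh : P.weq zh := (P.po_weq hi'' hpoQ).1 hweh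
  have hσow : i'' ≫ σt ≫ fb = eh ≫ fbar' := by
    rw [← Category.assoc, hiσd, hehf]
  set σo := hpoQ.desc (σt ≫ fb) fbar' hσow with hσodef
  have hσo1 : zh ≫ σo = σt ≫ fb := hpoQ.inl_desc _ _ _
  have hσo2 : io ≫ σo = fbar' := hpoQ.inr_desc _ _ _
  have hσow2 : P.weq σo := P.weq_of_comp_right hzh
    (by rw [hσo1]; exact P.weq_comp hσt hfb)
  -- upstairs pushout and join morphism
  obtain ⟨J', bo, ao, hpoU, hcao⟩ := P.po_exists io pbar' hio
  have hpoUf : IsPushout pbar' io ao bo := hpoU.flip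
  have hjw : pbar' ≫ h' = io ≫ σo ≫ q' := by
    calc pbar' ≫ h' = fbar' ≫ q' := hpbu.w.symm
      _ = (io ≫ σo) ≫ q' := by rw [hσo2]
      _ = io ≫ σo ≫ q' := by rw [Category.assoc]
  set j' := hpoUf.desc h' (σo ≫ q') hjw with hj'def
  have hj'1 : ao ≫ j' = h' := hpoUf.inl_desc _ _ _
  have hj'2 : bo ≫ j' = σo ≫ q' := hpoUf.inr_desc _ _ _
  -- the comparison map
  have hww : pbar'' ≫ u ≫ ao = i'' ≫ zh ≫ bo := by
    calc pbar'' ≫ u ≫ ao = (pbar'' ≫ u) ≫ ao := by rw [Category.assoc]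
      _ = (eh ≫ pbar') ≫ ao := by rw [hehp]
      _ = eh ≫ pbar' ≫ ao := by rw [Category.assoc]
      _ = eh ≫ io ≫ bo := by rw [hpoUf.w]
      _ = (eh ≫ io) ≫ bo := by rw [Category.assoc]
      _ = (i'' ≫ zh) ≫ bo := by rw [← hpoQ.w]
      _ = i'' ≫ zh ≫ bo := by rw [Category.assoc]
  set w := hpod.desc (u ≫ ao) (zh ≫ bo) hww with hwdef
  have hw1 : a'' ≫ w = u ≫ ao := hpod.inl_desc _ _ _
  have hw2 : bz'' ≫ w = zh ≫ bo := hpod.inr_desc _ _ _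
  have hwj : w ≫ j' = j'' ≫ β := by
    refine hpod.hom_ext ?_ ?_
    · calc a'' ≫ w ≫ j' = (a'' ≫ w) ≫ j' := (Category.assoc _ _ _).symm
        _ = (u ≫ ao) ≫ j' := by rw [hw1]
        _ = u ≫ ao ≫ j' := Category.assoc _ _ _
        _ = u ≫ h' := by rw [hj'1]
        _ = h ≫ β := huh
        _ = (a'' ≫ j'') ≫ β := by rw [haj]
        _ = a'' ≫ j'' ≫ β := Category.assoc _ _ _
    · calc bz'' ≫ w ≫ j' = (bz'' ≫ w) ≫ j' := (Category.assoc _ _ _).symm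
        _ = (zh ≫ bo) ≫ j' := by rw [hw2]
        _ = zh ≫ bo ≫ j' := Category.assoc _ _ _
        _ = zh ≫ σo ≫ q' := by rw [hj'2]
        _ = (zh ≫ σo) ≫ q' := (Category.assoc _ _ _).symm
        _ = (σt ≫ fb) ≫ q' := by rw [hσo1]
        _ = σt ≫ fb ≫ q' := Category.assoc _ _ _
        _ = σt ≫ qb ≫ β := by rw [hfbq]
        _ = (σt ≫ qb) ≫ β := (Category.assoc _ _ _).symm
        _ = (bz'' ≫ j'') ≫ β := by rw [hbj]
        _ = bz'' ≫ j'' ≫ β := Category.assoc _ _ _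
  -- the comparison map is a weak equivalence
  have hca'' : P.cofib a'' := cofib_inr_of_isPushout P hpod.flip hi''
  obtain ⟨J₂, l, r, hpo2, _⟩ := P.po_exists a'' u hca''
  have hl : P.weq l := (P.po_weq hca'' hpo2).1 hu
  have hmw : i'' ≫ bz'' ≫ l = eh ≫ pbar' ≫ r := by
    calc i'' ≫ bz'' ≫ l = (i'' ≫ bz'') ≫ l := (Category.assoc _ _ _).symm
      _ = (pbar'' ≫ a'') ≫ l := by rw [← hpod.w]
      _ = pbar'' ≫ a'' ≫ l := Category.assoc _ _ _
      _ = pbar'' ≫ u ≫ r := by rw [hpo2.w]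
      _ = (pbar'' ≫ u) ≫ r := (Category.assoc _ _ _).symm
      _ = (eh ≫ pbar') ≫ r := by rw [hehp]
      _ = eh ≫ pbar' ≫ r := Category.assoc _ _ _
  set m := hpoQ.desc (bz'' ≫ l) (pbar' ≫ r) hmw with hmdef
  have hm1 : zh ≫ m = bz'' ≫ l := hpoQ.inl_desc _ _ _
  have hm2 : io ≫ m = pbar' ≫ r := hpoQ.inr_desc _ _ _
  have big : IsPushout i'' (eh ≫ pbar') (zh ≫ m) r := by
    have hp1 := hpod.flip.paste_vert hpo2
    rw [← hehp, ← hm1] at hp1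
    exact hp1
  have hS' : IsPushout io pbar' m r := IsPushout.of_top big hm2 hpoQ
  -- identify the two pushouts of (io, pbar')
  set φ := hS'.isoIsPushout _ _ hpoU with hφdef
  have hφ1 : m ≫ φ.hom = bo := IsPushout.inl_isoIsPushout_hom (h := hS') (h' := hpoU)
  have hφ2 : r ≫ φ.hom = ao := IsPushout.inr_isoIsPushout_hom (h := hS') (h' := hpoU)
  have hwfac : w = l ≫ φ.hom := by
    refine hpod.hom_ext ?_ ?_
    · calc a'' ≫ w = u ≫ ao := hw1
        _ = u ≫ r ≫ φ.hom := by rw [hφ2]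
        _ = (u ≫ r) ≫ φ.hom := (Category.assoc _ _ _).symm
        _ = (a'' ≫ l) ≫ φ.hom := by rw [← hpo2.w]
        _ = a'' ≫ l ≫ φ.hom := Category.assoc _ _ _
    · calc bz'' ≫ w = zh ≫ bo := hw2
        _ = zh ≫ m ≫ φ.hom := by rw [hφ1]
        _ = (zh ≫ m) ≫ φ.hom := (Category.assoc _ _ _).symm
        _ = (bz'' ≫ l) ≫ φ.hom := by rw [hm1]
        _ = bz'' ≫ l ≫ φ.hom := Category.assoc _ _ _
  have hweqw : P.weq w := by
    rw [hwfac]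
    exact P.weq_comp hl (weq_of_isIso P φ.hom)
  exact ⟨Q, J', io, σo, ao, bo, j', w, hio, hσow2, hσo2, hpoUf, hj'1, hj'2, hweqw, hwj⟩

end GsecatAux
namespace GsecatAux

variable {C : Type u} [Category.{v} C] [HasZeroObject C] [HasZeroMorphisms C]
variable (P : PreJCat C)

/-- Transport a join backwards along a single weak-equivalence step of pairs. -/
lemma buildBwd (hc : ∀ X : C, P.CofModel X)
    {X B Cc X' B' Cc' : C} {h : X ⟶ B} {p : Cc ⟶ B} {h' : X' ⟶ B'} {p' : Cc' ⟶ B'}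
    {u : X ⟶ X'} {v : Cc ⟶ Cc'} {β : B ⟶ B'}
    (hu : P.weq u) (hv : P.weq v) (hβ : P.weq β)
    (huh : u ≫ h' = h ≫ β) (hvp : v ≫ p' = p ≫ β)
    {J' : C} {j' : J' ⟶ B'} (hj' : P.IsJoin h' p' j') :
    ∃ (J₀ : C) (j₀ : J₀ ⟶ B), P.IsJoin h p j₀ ∧ pZig P ⟨j₀, p⟩ ⟨j', p'⟩ := by
  obtain ⟨Eg', τ', q', hτ', hq', hτq', E₀', Z', fbar', pbar', iY, σY, aY, bY,
    hpbu, hciY, hwσY, hiσY, hpoY, haY, hbY⟩ := hj'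
  -- Step 1: pull the F-factorization back along β
  obtain ⟨Pg, fb, qb, hsq0, hqb⟩ := P.pb_exists q' β hq'
  have hfb : P.weq fb := (P.pb_weq hq' hsq0).1 hβ
  have hτw : (v ≫ τ') ≫ q' = p ≫ β := by rw [Category.assoc, hτq', hvp]
  set τb := hsq0.lift (v ≫ τ') p hτw with hτbdef
  have hτbq : τb ≫ qb = p := hsq0.lift_snd _ _ _
  have hτb : P.weq τb := P.weq_of_comp_left hfb
    (by rw [hsq0.lift_fst]; exact P.weq_comp hv hτ')
  -- Step 2: downstairs pullback and its comparison with the upstairs one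
  obtain ⟨E₀, fbar'', pbar'', hpbd, _⟩ := P.pb_exists qb h hqb
  obtain ⟨eh, hweh, hehf, hehp⟩ := stepTwoLift P hq' hsq0 hu huh hpbd hpbu
  -- downstairs C-factorization and pushout
  obtain ⟨Zt, i'', σt, hi'', hσt, hiσd⟩ := P.C_fac fbar''
  obtain ⟨J₀, bz'', a'', hpo0, _⟩ := P.po_exists i'' pbar'' hi''
  have hpo0f : IsPushout pbar'' i'' a'' bz'' := hpo0.flip
  have hj₀w : pbar'' ≫ h = i'' ≫ σt ≫ qb := by
    calc pbar'' ≫ h = fbar'' ≫ qb := hpbd.w.symm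
      _ = (i'' ≫ σt) ≫ qb := by rw [hiσd]
      _ = i'' ≫ σt ≫ qb := Category.assoc _ _ _
  set j₀ := hpo0f.desc h (σt ≫ qb) hj₀w with hj₀def
  have hja : a'' ≫ j₀ = h := hpo0f.inl_desc _ _ _
  have hjb : bz'' ≫ j₀ = σt ≫ qb := hpo0f.inr_desc _ _ _
  have hjoin₀ : P.IsJoin h p j₀ :=
    ⟨Pg, τb, qb, hτb, hqb, hτbq, E₀, Zt, fbar'', pbar'', i'', σt, a'', bz'',
      hpbd, hi'', hσt, hiσd, hpo0f, hja, hjb⟩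
  -- buildCore
  obtain ⟨Q, Jo, io, σo, ao, bo, jo, w, hio, hσo, hioσ, hpoo, haoj, hboj, hww, hwj⟩ :=
    buildCore P hu huh hqb hpbd hi'' hσt hiσd hpo0f hja hjb hq' hpbu hfb hsq0.w
      hweh hehf hehp
  -- zigzag: single step to `jo`, then C-factorization independence to `j'`
  have step1 : pZig P ⟨j₀, p⟩ ⟨jo, p'⟩ :=
    pZig.rel P ⟨w, v, β, hww, hv, hβ, hwj, hvp⟩
  have step2 : pZig P ⟨jo, p'⟩ ⟨j', p'⟩ :=
    corep P (hpbu.w.symm) p' hio hσo hioσ hciY hwσY hiσY hpoo hpoY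
      haoj hboj haY hbY
  exact ⟨J₀, j₀, hjoin₀, pZig.trans P step1 step2⟩

/-- Transport a join forwards along a single weak-equivalence step of pairs. -/
lemma buildFwd (hc : ∀ X : C, P.CofModel X)
    {X B Cc X' B' Cc' : C} {h : X ⟶ B} {p : Cc ⟶ B} {h' : X' ⟶ B'} {p' : Cc' ⟶ B'}
    {u : X ⟶ X'} {v : Cc ⟶ Cc'} {β : B ⟶ B'}
    (hu : P.weq u) (hv : P.weq v) (hβ : P.weq β)
    (huh : u ≫ h' = h ≫ β) (hvp : v ≫ p' = p ≫ β)
    {J₀ : C} {j₀ : J₀ ⟶ B} (hj₀ : P.IsJoin h p j₀) :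
    ∃ (J' : C) (j' : J' ⟶ B'), P.IsJoin h' p' j' ∧ pZig P ⟨j₀, p⟩ ⟨j', p'⟩ := by
  obtain ⟨Eg, τ, q, hτ, hq, hτq, E₀, Zt, fbar'', pbar'', i'', σt, a'', bz'',
    hpbd0, hi'', hσt, hiσd, hpod, haj, hbj⟩ := hj₀
  -- upstairs F-factorization of p'
  obtain ⟨Eg', τ', q', hτ', hq', hτq'⟩ := P.F_fac p'
  -- its pullback along β
  obtain ⟨P₂, fb₂, qb₂, hsq0, hqb₂⟩ := P.pb_exists q' β hq'
  have hfb₂ : P.weq fb₂ := (P.pb_weq hq' hsq0).1 hβ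
  have hτw : (v ≫ τ') ≫ q' = p ≫ β := by rw [Category.assoc, hτq', hvp]
  set τb₂ := hsq0.lift (v ≫ τ') p hτw with hτb₂def
  have hτb₂q : τb₂ ≫ qb₂ = p := hsq0.lift_snd _ _ _
  have hτb₂ : P.weq τb₂ := P.weq_of_comp_left hfb₂
    (by rw [hsq0.lift_fst]; exact P.weq_comp hv hτ')
  -- compare the two F-factorizations of p over B
  obtain ⟨θ, hθ, hθq⟩ := ffCompare P hc hτ hq hτb₂ hqb₂ (by rw [hτq, hτb₂q])
  -- intermediate pullback over B and Brown comparison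
  obtain ⟨E₀m, fbm, pbm, hpbm, _⟩ := P.pb_exists qb₂ h hqb₂
  obtain ⟨ehm, hehm, em1, em2⟩ := brownPullback P hq hqb₂ hθ hθq hpbd0 hpbm
  -- upstairs pullback and the β-comparison
  obtain ⟨E₀', fbar', pbar', hpbu, _⟩ := P.pb_exists q' h' hq'
  obtain ⟨eh₂, heh₂, f1, f2⟩ := stepTwoLift P hq' hsq0 hu huh hpbm hpbu
  set eh := ehm ≫ eh₂ with hehdef
  have hweh : P.weq eh := P.weq_comp hehm heh₂
  have hehf : eh ≫ fbar' = fbar'' ≫ θ ≫ fb₂ := by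
    calc (ehm ≫ eh₂) ≫ fbar' = ehm ≫ eh₂ ≫ fbar' := Category.assoc _ _ _
      _ = ehm ≫ fbm ≫ fb₂ := by rw [f1]
      _ = (ehm ≫ fbm) ≫ fb₂ := (Category.assoc _ _ _).symm
      _ = (fbar'' ≫ θ) ≫ fb₂ := by rw [em1]
      _ = fbar'' ≫ θ ≫ fb₂ := Category.assoc _ _ _
  have hehp : eh ≫ pbar' = pbar'' ≫ u := by
    calc (ehm ≫ eh₂) ≫ pbar' = ehm ≫ eh₂ ≫ pbar' := Category.assoc _ _ _
      _ = ehm ≫ pbm ≫ u := by rw [f2]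
      _ = (ehm ≫ pbm) ≫ u := (Category.assoc _ _ _).symm
      _ = pbar'' ≫ u := by rw [em2]
  have hfb : P.weq (θ ≫ fb₂) := P.weq_comp hθ hfb₂
  have hfbq : (θ ≫ fb₂) ≫ q' = q ≫ β := by
    calc (θ ≫ fb₂) ≫ q' = θ ≫ fb₂ ≫ q' := Category.assoc _ _ _
      _ = θ ≫ qb₂ ≫ β := by rw [hsq0.w]
      _ = (θ ≫ qb₂) ≫ β := (Category.assoc _ _ _).symm
      _ = q ≫ β := by rw [hθq]
  obtain ⟨Q, Jo, io, σo, ao, bo, jo, w, hio, hσo, hioσ, hpoo, haoj, hboj, hww, hwj⟩ :=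
    buildCore P hu huh hq hpbd0 hi'' hσt hiσd hpod haj hbj hq' hpbu hfb hfbq
      hweh hehf hehp
  have hjoin : P.IsJoin h' p' jo :=
    ⟨Eg', τ', q', hτ', hq', hτq', E₀', Q, fbar', pbar', io, σo, ao, bo,
      hpbu, hio, hσo, hioσ, hpoo, haoj, hboj⟩
  exact ⟨Jo, jo, hjoin, pZig.rel P ⟨w, v, β, hww, hv, hβ, hwj, hvp⟩⟩

end GsecatAux
namespace GsecatAux

variable {C : Type u} [Category.{v} C] [HasZeroObject C] [HasZeroMorphisms C]
variable (P : PreJCat C)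

/-- Transport of joins along a zigzag of pairs, in both directions. -/
lemma jtrans (hc : ∀ X : C, P.CofModel X) {a b : PO C} (hz : pZig P a b) :
    (∀ {J' : C} (j' : J' ⟶ b.B), P.IsJoin b.h b.p j' →
      ∃ (J : C) (j : J ⟶ a.B), P.IsJoin a.h a.p j ∧ pZig P ⟨j, a.p⟩ ⟨j', b.p⟩) ∧
    (∀ {J : C} (j : J ⟶ a.B), P.IsJoin a.h a.p j →
      ∃ (J' : C) (j' : J' ⟶ b.B), P.IsJoin b.h b.p j' ∧ pZig P ⟨j, a.p⟩ ⟨j', b.p⟩) := by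
  induction hz with
  | rel x y hxy =>
      obtain ⟨u, v, β, hu, hv, hβ, huh, hvp⟩ := hxy
      constructor
      · intro J' j' hj'
        obtain ⟨J₀, j₀, hj₀, hpz⟩ := buildBwd P hc hu hv hβ huh hvp hj'
        exact ⟨J₀, j₀, hj₀, hpz⟩
      · intro J j hj
        obtain ⟨J', j', hj', hpz⟩ := buildFwd P hc hu hv hβ huh hvp hj
        exact ⟨J', j', hj', hpz⟩
  | refl x =>
      exact ⟨fun j' hj' => ⟨_, j', hj', pZig.refl P _⟩,
        fun j hj => ⟨_, j, hj, pZig.refl P _⟩⟩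
  | symm x y _ ih =>
      refine ⟨fun j hj => ?_, fun j hj => ?_⟩
      · obtain ⟨J', j', hj', hpz⟩ := ih.2 j hj
        exact ⟨J', j', hj', pZig.symm P hpz⟩
      · obtain ⟨J', j', hj', hpz⟩ := ih.1 j hj
        exact ⟨J', j', hj', pZig.symm P hpz⟩
  | trans x y zc _ _ ih1 ih2 =>
      constructor
      · intro J' j' hj'
        obtain ⟨Jb, jb, hjb, hz2⟩ := ih2.1 j' hj'
        obtain ⟨Ja, ja, hja, hz1⟩ := ih1.1 jb hjb
        exact ⟨Ja, ja, hja, pZig.trans P hz1 hz2⟩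
      · intro J j hj
        obtain ⟨Jb, jb, hjb, hz1⟩ := ih1.2 j hj
        obtain ⟨Jc, jc, hjc, hz2⟩ := ih2.2 jb hjb
        exact ⟨Jc, jc, hjc, pZig.trans P hz1 hz2⟩

/-- Transport of iterated joins along a zigzag of pairs. -/
lemma master (hc : ∀ X : C, P.CofModel X) {E B E' B' : C} {p : E ⟶ B} {p' : E' ⟶ B'}
    (hz : pZig P ⟨p, p⟩ ⟨p', p'⟩) {m : ℕ} {X' : C} {h' : X' ⟶ B'}
    (hiter : P.IsIterJoin p' m h') :
    ∃ (X : C) (h : X ⟶ B), P.IsIterJoin p m h ∧ pZig P ⟨h, p⟩ ⟨h', p'⟩ := by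
  induction hiter with
  | zero => exact ⟨E, p, .zero, hz⟩
  | succ hprev hjoin ih =>
      obtain ⟨Xm, hm, hiterm, hpz⟩ := ih
      obtain ⟨J, j, hj, hpz'⟩ := (jtrans P hc hpz).1 _ hjoin
      exact ⟨J, j, .succ hiterm hj, hpz'⟩

/-- A zigzag of weak equivalences in the arrow category gives a zigzag of pairs. -/
lemma pzig_of_arrowZig {x y : Arrow C} (hz : Relation.EqvGen P.MorWeqStep x y) :
    pZig P ⟨x.hom, x.hom⟩ ⟨y.hom, y.hom⟩ := by
  induction hz with
  | rel x y hxy =>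
      obtain ⟨φ, hl, hr⟩ := hxy
      exact pZig.rel P ⟨φ.left, φ.left, φ.right, hl, hl, hr, Arrow.w φ, Arrow.w φ⟩
  | refl x => exact pZig.refl P _
  | symm _ _ _ ih => exact pZig.symm P ih
  | trans _ _ _ _ _ ih1 ih2 => exact pZig.trans P ih1 ih2

/-- Weak sections transfer along zigzags of pairs. -/
lemma hws_iff_of_pzig (hc : ∀ X : C, P.CofModel X) {a b : PO C} (hz : pZig P a b) :
    P.HasWeakSection a.h ↔ P.HasWeakSection b.h := by
  induction hz with
  | rel x y hxy =>
      obtain ⟨u, v, β, hu, hv, hβ, huh, hvp⟩ := hxy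
      exact ⟨fun hws => hasWeakSection_of_weqSq' P hc u β hu hβ huh hws,
        fun hws => hasWeakSection_of_weqSq P u β hu hβ huh hws⟩
  | refl x => exact Iff.rfl
  | symm _ _ _ ih => exact ih.symm
  | trans _ _ _ _ _ ih1 ih2 => exact ih1.trans ih2

/-- Transport of "iterated join with a weak section" along a zigzag of pairs. -/
lemma transfer (hc : ∀ X : C, P.CofModel X) {E B E' B' : C} {p : E ⟶ B} {p' : E' ⟶ B'}
    (hz : pZig P ⟨p, p⟩ ⟨p', p'⟩) (m : ℕ)
    (hx : ∃ (X : C) (h₂ : X ⟶ B'), P.IsIterJoin p' m h₂ ∧ P.HasWeakSection h₂) :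
    ∃ (X : C) (h₁ : X ⟶ B), P.IsIterJoin p m h₁ ∧ P.HasWeakSection h₁ := by
  obtain ⟨X₂, h₂, hit, hws⟩ := hx
  obtain ⟨X₁, h₁, hit₁, hpz⟩ := master P hc hz hit
  exact ⟨X₁, h₁, hit₁, (hws_iff_of_pzig P hc hpz).2 hws⟩

end GsecatAux

/-- In a J-category in which all objects are cofibrant models,
weakly equivalent morphisms have the same Ganea sectional category. -/
theorem Gsecat_eq_of_weaklyEquivMor (J : JCat C)
    (hc : ∀ X : C, J.toPreJCat.CofModel X)
    {E B E' B' : C} (p : E ⟶ B) (p' : E' ⟶ B')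
    (h : J.toPreJCat.WeaklyEquivMor (Arrow.mk p) (Arrow.mk p')) :
    J.toPreJCat.Gsecat p = J.toPreJCat.Gsecat p' := by
  have hz : GsecatAux.pZig J.toPreJCat ⟨p, p⟩ ⟨p', p'⟩ :=
    GsecatAux.pzig_of_arrowZig J.toPreJCat h
  unfold PreJCat.Gsecat
  congr 1
  ext n
  simp only [Set.mem_setOf_eq]
  constructor
  · rintro ⟨m, rfl, hx⟩
    exact ⟨m, rfl, GsecatAux.transfer J.toPreJCat hc
      (GsecatAux.pZig.symm J.toPreJCat hz) m hx⟩
  · rintro ⟨m, rfl, hx⟩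
    exact ⟨m, rfl, GsecatAux.transfer J.toPreJCat hc hz m hx⟩
end

section
/- In a J-category in which all objects are cofibrant models, if p : E → B and p' : E' → B' are weakly equivalent morphisms, then Wsecat(p) = Wsecat(p'). -/
open CategoryTheory CategoryTheory.Limits ZeroObject

universe v u v' u'

variable (C : Type u) [Category.{v} C] [HasZeroObject C] [HasZeroMorphisms C]

variable {C}

variable (C)

variable {C}

set_option linter.unusedSectionVars false
set_option maxHeartbeats 1000000

namespace WsecatAux

open PreJCat

/-- Build an `IsPullback` from a universal property. -/
lemma mk_isPullback {P X Y Z : C} {fst : P ⟶ X} {snd : P ⟶ Y} {f : X ⟶ Z} {g : Y ⟶ Z}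
    (comm : fst ≫ f = snd ≫ g)
    (lift : ∀ {W : C} (a : W ⟶ X) (b : W ⟶ Y), a ≫ f = b ≫ g → (W ⟶ P))
    (hfst : ∀ {W : C} (a : W ⟶ X) (b : W ⟶ Y) (w : a ≫ f = b ≫ g), lift a b w ≫ fst = a)
    (hsnd : ∀ {W : C} (a : W ⟶ X) (b : W ⟶ Y) (w : a ≫ f = b ≫ g), lift a b w ≫ snd = b)
    (uniq : ∀ {W : C} (c c' : W ⟶ P), c ≫ fst = c' ≫ fst → c ≫ snd = c' ≫ snd → c = c') :
    IsPullback fst snd f g := by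
  refine IsPullback.of_isLimit (c := PullbackCone.mk fst snd comm) ?_
  exact PullbackCone.IsLimit.mk comm (fun s => lift s.fst s.snd s.condition)
    (fun s => hfst _ _ _) (fun s => hsnd _ _ _)
    (fun s m h1 h2 => uniq m _ (by rw [h1, hfst]) (by rw [h2, hsnd]))

/-- Build an `IsPushout` from a universal property. -/
lemma mk_isPushout {Z X Y P : C} {f : Z ⟶ X} {g : Z ⟶ Y} {inl : X ⟶ P} {inr : Y ⟶ P}
    (comm : f ≫ inl = g ≫ inr)
    (desc : ∀ {W : C} (a : X ⟶ W) (b : Y ⟶ W), f ≫ a = g ≫ b → (P ⟶ W))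
    (hinl : ∀ {W : C} (a : X ⟶ W) (b : Y ⟶ W) (w : f ≫ a = g ≫ b), inl ≫ desc a b w = a)
    (hinr : ∀ {W : C} (a : X ⟶ W) (b : Y ⟶ W) (w : f ≫ a = g ≫ b), inr ≫ desc a b w = b)
    (uniq : ∀ {W : C} (c c' : P ⟶ W), inl ≫ c = inl ≫ c' → inr ≫ c = inr ≫ c' → c = c') :
    IsPushout f g inl inr := by
  refine IsPushout.of_isColimit (c := PushoutCocone.mk inl inr comm) ?_
  exact PushoutCocone.IsColimit.mk comm (fun s => desc s.inl s.inr s.condition)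
    (fun s => hinl _ _ _) (fun s => hinr _ _ _)
    (fun s m h1 h2 => uniq m _ (by rw [h1, hinl]) (by rw [h2, hinr]))

lemma to_zero_eq {X : C} (f g : X ⟶ (0 : C)) : f = g :=
  (isZero_zero C).eq_of_tgt f g

section BinProd

/-- lift into a binary product -/
noncomputable def bpLift {X Y Pd : C} {p1 : Pd ⟶ X} {p2 : Pd ⟶ Y} (h : IsBinProd p1 p2)
    {W : C} (f : W ⟶ X) (g : W ⟶ Y) : W ⟶ Pd :=
  (BinaryFan.IsLimit.lift' h.some f g).1

@[simp] lemma bpLift_fst {X Y Pd : C} {p1 : Pd ⟶ X} {p2 : Pd ⟶ Y} (h : IsBinProd p1 p2)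
    {W : C} (f : W ⟶ X) (g : W ⟶ Y) : bpLift h f g ≫ p1 = f :=
  (BinaryFan.IsLimit.lift' h.some f g).2.1

@[simp] lemma bpLift_snd {X Y Pd : C} {p1 : Pd ⟶ X} {p2 : Pd ⟶ Y} (h : IsBinProd p1 p2)
    {W : C} (f : W ⟶ X) (g : W ⟶ Y) : bpLift h f g ≫ p2 = g :=
  (BinaryFan.IsLimit.lift' h.some f g).2.2

lemma bp_hom_ext {X Y Pd : C} {p1 : Pd ⟶ X} {p2 : Pd ⟶ Y} (h : IsBinProd p1 p2)
    {W : C} {f g : W ⟶ Pd} (h1 : f ≫ p1 = g ≫ p1) (h2 : f ≫ p2 = g ≫ p2) : f = g :=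
  BinaryFan.IsLimit.hom_ext h.some h1 h2

lemma mk_binProd {X Y Pd : C} {p1 : Pd ⟶ X} {p2 : Pd ⟶ Y}
    (lift : ∀ {W : C} (f : W ⟶ X) (g : W ⟶ Y), W ⟶ Pd)
    (h1 : ∀ {W : C} (f : W ⟶ X) (g : W ⟶ Y), lift f g ≫ p1 = f)
    (h2 : ∀ {W : C} (f : W ⟶ X) (g : W ⟶ Y), lift f g ≫ p2 = g)
    (uniq : ∀ {W : C} (c c' : W ⟶ Pd), c ≫ p1 = c' ≫ p1 → c ≫ p2 = c' ≫ p2 → c = c') :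
    IsBinProd p1 p2 := by
  refine ⟨BinaryFan.isLimitMk (fun s => lift s.fst s.snd) (fun s => h1 _ _) (fun s => h2 _ _)
    (fun s m hm1 hm2 => uniq m _ ?_ ?_)⟩
  · rw [hm1]; exact (h1 _ _).symm
  · rw [hm2]; exact (h2 _ _).symm

lemma binProd_swap {X Y Pd : C} {p1 : Pd ⟶ X} {p2 : Pd ⟶ Y} (h : IsBinProd p1 p2) :
    IsBinProd p2 p1 :=
  mk_binProd (fun f g => bpLift h g f) (fun f g => bpLift_snd h g f)
    (fun f g => bpLift_fst h g f) (fun c c' e2 e1 => bp_hom_ext h e1 e2)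

/-- A pullback over the zero object is a binary product. -/
lemma binProd_of_pullback_zero {X Y P : C} {fb : P ⟶ Y} {pb : P ⟶ X}
    (h : IsPullback fb pb (0 : Y ⟶ (0:C)) (0 : X ⟶ (0:C))) : IsBinProd pb fb :=
  mk_binProd (fun f g => h.lift g f (to_zero_eq _ _))
    (fun f g => h.lift_snd _ _ _) (fun f g => h.lift_fst _ _ _)
    (fun c c' e1 e2 => h.hom_ext e2 e1)

end BinProd

variable {P : PreJCat C}

section Basic

lemma weq_iso {X Y : C} (f : X ⟶ Y) [IsIso f] : P.weq f := (P.iso_triv_fib f ‹_›).2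
lemma fib_iso {X Y : C} (f : X ⟶ Y) [IsIso f] : P.fib f := (P.iso_triv_fib f ‹_›).1
lemma cofib_iso {X Y : C} (f : X ⟶ Y) [IsIso f] : P.cofib f := (P.iso_triv_cofib f ‹_›).1
lemma weq_id (X : C) : P.weq (𝟙 X) := weq_iso _
lemma fib_id (X : C) : P.fib (𝟙 X) := fib_iso _

/-- trivial fibration -/
def TFib (P : PreJCat C) {X Y : C} (f : X ⟶ Y) : Prop := P.fib f ∧ P.weq f

lemma tfib_id (X : C) : TFib P (𝟙 X) := ⟨fib_id X, weq_id X⟩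
lemma tfib_comp {X Y Z : C} {f : X ⟶ Y} {g : Y ⟶ Z} (hf : TFib P f) (hg : TFib P g) :
    TFib P (f ≫ g) := ⟨P.fib_comp hf.1 hg.1, P.weq_comp hf.2 hg.2⟩

/-- Any pullback of a fibration (in the `pb` leg) is a fibration. -/
lemma fib_of_isPullback {E B B' Q : C} {p : E ⟶ B} {f : B' ⟶ B} {fb : Q ⟶ E} {pb : Q ⟶ B'}
    (hp : P.fib p) (h : IsPullback fb pb p f) : P.fib pb := by
  obtain ⟨R, fb', pb', h', hfib⟩ := P.pb_exists p f hp
  have hiso : IsIso (h'.lift fb pb h.w) := by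
    refine ⟨h.lift fb' pb' h'.w, ?_, ?_⟩
    · exact h.hom_ext (by simp [h.lift_fst, h'.lift_fst]) (by simp [h.lift_snd, h'.lift_snd])
    · exact h'.hom_ext (by simp [h.lift_fst, h'.lift_fst]) (by simp [h.lift_snd, h'.lift_snd])
  have : pb = h'.lift fb pb h.w ≫ pb' := by rw [h'.lift_snd]
  rw [this]
  exact P.fib_comp (fib_iso _) hfib

/-- Any pushout of a cofibration (in the `inr` leg) is a cofibration. -/
lemma cofib_of_isPushout {A X Y Q : C} {i : A ⟶ X} {g : A ⟶ Y} {inl : X ⟶ Q} {inr : Y ⟶ Q}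
    (hi : P.cofib i) (h : IsPushout i g inl inr) : P.cofib inr := by
  obtain ⟨R, inl', inr', h', hcof⟩ := P.po_exists i g hi
  have hiso : IsIso (h'.desc inl inr h.w) := by
    refine ⟨h.desc inl' inr' h'.w, ?_, ?_⟩
    · exact h'.hom_ext
        (by rw [← Category.assoc, h'.inl_desc, h.inl_desc, Category.comp_id])
        (by rw [← Category.assoc, h'.inr_desc, h.inr_desc, Category.comp_id])
    · exact h.hom_ext
        (by rw [← Category.assoc, h.inl_desc, h'.inl_desc, Category.comp_id])
        (by rw [← Category.assoc, h.inr_desc, h'.inr_desc, Category.comp_id])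
  have : inr = inr' ≫ h'.desc inl inr h.w := by rw [h'.inr_desc]
  rw [this]
  exact P.cofib_comp hcof (cofib_iso _)

end Basic

section Products

lemma prod_exists {Y : C} (hY : P.EFibrant Y) (X : C) :
    ∃ (R : C) (p1 : R ⟶ X) (p2 : R ⟶ Y), IsBinProd p1 p2 ∧ P.fib p1 := by
  obtain ⟨R, fb, pb, h, hfib⟩ := P.pb_exists (0 : Y ⟶ 0) (0 : X ⟶ 0) hY
  exact ⟨R, pb, fb, binProd_of_pullback_zero h, hfib⟩

lemma fib_fst {X Y Pd : C} {p1 : Pd ⟶ X} {p2 : Pd ⟶ Y} (h : IsBinProd p1 p2)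
    (hY : P.EFibrant Y) : P.fib p1 := by
  obtain ⟨R, g1, g2, hR, hfib⟩ := prod_exists (P := P) hY X
  have hiso : IsIso (bpLift hR p1 p2) := by
    refine ⟨bpLift h g1 g2, ?_, ?_⟩
    · exact bp_hom_ext h (by simp) (by simp)
    · exact bp_hom_ext hR (by simp) (by simp)
  have : p1 = bpLift hR p1 p2 ≫ g1 := by simp
  rw [this]
  exact P.fib_comp (fib_iso _) hfib

lemma fib_snd {X Y Pd : C} {p1 : Pd ⟶ X} {p2 : Pd ⟶ Y} (h : IsBinProd p1 p2)
    (hX : P.EFibrant X) : P.fib p2 :=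
  fib_fst (binProd_swap h) hX

lemma efib_binProd {X Y Pd : C} {p1 : Pd ⟶ X} {p2 : Pd ⟶ Y} (h : IsBinProd p1 p2)
    (hX : P.EFibrant X) (hY : P.EFibrant Y) : P.EFibrant Pd := by
  have : (0 : Pd ⟶ (0 : C)) = p1 ≫ (0 : X ⟶ (0:C)) := to_zero_eq _ _
  unfold PreJCat.EFibrant
  rw [this]
  exact P.fib_comp (fib_fst h hY) hX

end Products

section HPlemmas

lemma isPullback_id_right {X Y : C} (f : X ⟶ Y) : IsPullback f (𝟙 X) (𝟙 Y) f := by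
  refine mk_isPullback (by simp) (fun a b w => b) (fun a b w => by simpa using w.symm)
    (fun a b w => by simp) (fun c c' h1 h2 => by simpa using h2)

lemma hpb_id {X Y : C} (f : X ⟶ Y) : P.IsHPB f (𝟙 X) (𝟙 Y) f := by
  refine ⟨by simp, Y, 𝟙 Y, 𝟙 Y, weq_id _, fib_id _, by simp, X, f, 𝟙 X,
    isPullback_id_right f, 𝟙 X, weq_id _, by simp, by simp⟩

lemma hpb_comp_id {D A B : C} (m : D ⟶ A) (f : A ⟶ B) (hm : P.weq m) :
    P.IsHPB (m ≫ f) m (𝟙 B) f := by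
  refine ⟨by simp, B, 𝟙 B, 𝟙 B, weq_id _, fib_id _, by simp, A, f, 𝟙 A,
    isPullback_id_right f, m, hm, by simp, by simp⟩

lemma hpb_of_pb {D A Cc B : C} {f' : D ⟶ Cc} {g' : D ⟶ A} {g : Cc ⟶ B} {f : A ⟶ B}
    (hf : P.fib f) (hpb : IsPullback g' f' f g) : P.IsHPB f' g' g f := by
  obtain ⟨M, τ, qu, wτ, fqu, hfac⟩ := P.F_fac g
  obtain ⟨Pt, fb2, pb2, h2, hfpb2⟩ := P.pb_exists f qu hf
  have hw : g' ≫ f = (f' ≫ τ) ≫ qu := by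
    rw [hpb.w, Category.assoc, hfac]
  set w : D ⟶ Pt := h2.lift g' (f' ≫ τ) hw with hwdef
  have hw1 : w ≫ fb2 = g' := h2.lift_fst _ _ _
  have hw2 : w ≫ pb2 = f' ≫ τ := h2.lift_snd _ _ _
  have hleft : IsPullback w f' pb2 τ := by
    refine mk_isPullback hw2 (fun xa xb hxw => hpb.lift (xa ≫ fb2) xb ?_) ?_ ?_ ?_
    · rw [Category.assoc, h2.w, ← Category.assoc, hxw, Category.assoc, hfac]
    · intro W xa xb hxw
      refine h2.hom_ext ?_ ?_
      · rw [Category.assoc, hw1, hpb.lift_fst]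
      · rw [Category.assoc, hw2, ← Category.assoc, hpb.lift_snd, hxw]
    · intro W xa xb hxw; exact hpb.lift_snd _ _ _
    · intro W c c' h1 hsnd
      refine hpb.hom_ext ?_ hsnd
      have : c ≫ w ≫ fb2 = c' ≫ w ≫ fb2 := by
        rw [← Category.assoc, h1, Category.assoc]
      rwa [hw1] at this
  have hweqw : P.weq w := ((P.pb_weq hfpb2 hleft).1) wτ
  exact ⟨hpb.w.symm, M, τ, qu, wτ, fqu, hfac, Pt, pb2, fb2, h2.flip, w, hweqw, hw2, hw1⟩

lemma hpo_of_pushout {A X Y Q : C} {i : A ⟶ X} {g : A ⟶ Y} {inl : X ⟶ Q} {inr : Y ⟶ Q}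
    (hi : P.cofib i) (h : IsPushout i g inl inr) : P.IsHPO i g inl inr :=
  ⟨h.w, X, i, 𝟙 X, hi, weq_id _, by simp, Q, inl, inr, h, 𝟙 Q, weq_id _, by simp, by simp⟩

end HPlemmas

section Sections

/-- Lemma S : a fibration which receives a map whose composite to the base is a
weak equivalence admits an honest section (all objects cofibrant models). -/
lemma sec_of_weq_comp (hc : ∀ X : C, P.CofModel X) {W X F : C} {r : X ⟶ F} (hr : P.fib r)
    (x : W ⟶ X) (hxr : P.weq (x ≫ r)) : ∃ s : F ⟶ X, s ≫ r = 𝟙 F := by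
  obtain ⟨N, α, qN, wα, fqN, hfac⟩ := P.F_fac x
  have h1 : α ≫ (qN ≫ r) = x ≫ r := by rw [← Category.assoc, hfac]
  have h2 : P.weq (qN ≫ r) := P.weq_of_comp_right wα (h1 ▸ hxr)
  obtain ⟨s0, hs0⟩ := hc F (qN ≫ r) (P.fib_comp fqN hr) h2
  exact ⟨s0 ≫ qN, by rw [Category.assoc]; exact hs0⟩

/-- Transfer of sections between two fibrant replacements over the same base. -/
lemma section_transfer (hc : ∀ X : C, P.CofModel X) {T Bb A Z₁ Z₂ : C}
    {q₁ : Z₁ ⟶ Bb} {q₂ : Z₂ ⟶ Bb} (hq₁ : P.fib q₁) (hq₂ : P.fib q₂)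
    {τ₁ : T ⟶ Z₁} {τ₂ : T ⟶ Z₂} (hτ₁ : P.weq τ₁) (hτ₂ : P.weq τ₂)
    (hcomm : τ₁ ≫ q₁ = τ₂ ≫ q₂) {f : A ⟶ Bb} {s₁ : A ⟶ Z₁} (hs₁ : s₁ ≫ q₁ = f) :
    ∃ s₂ : A ⟶ Z₂, s₂ ≫ q₂ = f := by
  -- pullback of the two replacements
  obtain ⟨Pp, fbP, pbP, hP, hfibpbP⟩ := P.pb_exists q₂ q₁ hq₂
  set u : T ⟶ Pp := hP.lift τ₂ τ₁ hcomm.symm with hu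
  obtain ⟨R, α, u', wα, fu', hfacu⟩ := P.F_fac u
  set ρ₁ : R ⟶ Z₁ := u' ≫ pbP with hρ₁
  set ρ₂ : R ⟶ Z₂ := u' ≫ fbP with hρ₂
  have hαρ₁ : α ≫ ρ₁ = τ₁ := by rw [hρ₁, ← Category.assoc, hfacu, hu, hP.lift_snd]
  have hαρ₂ : α ≫ ρ₂ = τ₂ := by rw [hρ₂, ← Category.assoc, hfacu, hu, hP.lift_fst]
  have hwρ₁ : P.weq ρ₁ := P.weq_of_comp_right wα (hαρ₁ ▸ hτ₁)
  have hwρ₂ : P.weq ρ₂ := P.weq_of_comp_right wα (hαρ₂ ▸ hτ₂)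
  have hfρ₁ : P.fib ρ₁ := P.fib_comp fu' hfibpbP
  -- pull ρ₁ back along s₁
  obtain ⟨Wo, fbW, pbW, hW, hfibpbW⟩ := P.pb_exists ρ₁ s₁ hfρ₁
  have hwpbW : P.weq pbW := (P.pb_weq hfρ₁ hW).2 hwρ₁
  -- pullback of q₂ along f
  obtain ⟨Xp, fbX, pbX, hX, hfibpbX⟩ := P.pb_exists q₂ f hq₂
  have hcompat : ρ₂ ≫ q₂ = ρ₁ ≫ q₁ := by
    rw [hρ₁, hρ₂, Category.assoc, Category.assoc, hP.w]
  have hwm : (fbW ≫ ρ₂) ≫ q₂ = pbW ≫ f := by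
    rw [Category.assoc, hcompat, ← Category.assoc, hW.w, Category.assoc, hs₁]
  set wm : Wo ⟶ Xp := hX.lift (fbW ≫ ρ₂) pbW hwm with hwmdef
  have : wm ≫ pbX = pbW := hX.lift_snd _ _ _
  obtain ⟨σ, hσ⟩ := sec_of_weq_comp (P := P) hc hfibpbX wm (by rw [this]; exact hwpbW)
  refine ⟨σ ≫ fbX, ?_⟩
  rw [Category.assoc, hX.w, ← Category.assoc, hσ, Category.id_comp]

end Sections

section Nodes

variable (P)

/-- A bare node for zigzag comparisons: a map `j` over an e-fibrant "power" `Pw`,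
with a "diagonal" `Δ`, over a base morphism `r : E ⟶ F`. -/
structure Node where
  {E F T Pw : C}
  r : E ⟶ F
  j : T ⟶ Pw
  Δ : F ⟶ Pw
  hF : P.EFibrant F
  hPw : P.EFibrant Pw

variable {P}

/-- A bridge between two nodes. -/
def Edge (a b : Node P) : Prop :=
  ∃ (w : a.E ⟶ b.E) (β : a.F ⟶ b.F) (t : a.T ⟶ b.T) (φ : a.Pw ⟶ b.Pw),
    P.weq w ∧ TFib P β ∧ P.weq t ∧ TFib P φ ∧
    w ≫ b.r = a.r ≫ β ∧ t ≫ b.j = a.j ≫ φ ∧ a.Δ ≫ φ = β ≫ b.Δ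

def EdgeSym (a b : Node P) : Prop := Edge a b ∨ Edge b a

/-- Nodes joined by a zigzag of bridges. -/
def Linked (a b : Node P) : Prop := Relation.ReflTransGen EdgeSym a b

lemma linked_symm {a b : Node P} (h : Linked a b) : Linked b a := by
  induction h with
  | refl => exact Relation.ReflTransGen.refl
  | tail _ e ih =>
      exact Relation.ReflTransGen.trans (Relation.ReflTransGen.single (Or.elim e Or.inr Or.inl)) ih

lemma linked_of_edge {a b : Node P} (e : Edge a b) : Linked a b :=
  Relation.ReflTransGen.single (Or.inl e)

/-- Backward transfer of weak liftings along a bridge. -/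
lemma wl_back {a b : Node P} (e : Edge a b) (h : P.WeakLifting b.Δ b.j) :
    P.WeakLifting a.Δ a.j := by
  obtain ⟨w, β, t, φ, hw, hβ, ht, hφ, hsq, hjj, hΔΔ⟩ := e
  obtain ⟨Zt, τt, qt, wτt, fqt, hfact, st, hst⟩ := h
  obtain ⟨Zs, fbZ, qs, hZ, hfqs⟩ := P.pb_exists qt φ fqt
  have hwfbZ : P.weq fbZ := (P.pb_weq fqt hZ).1 hφ.2
  have hτw : (t ≫ τt) ≫ qt = a.j ≫ φ := by rw [Category.assoc, hfact, hjj]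
  set τs : a.T ⟶ Zs := hZ.lift (t ≫ τt) a.j hτw with hτs
  have h1 : τs ≫ fbZ = t ≫ τt := hZ.lift_fst _ _ _
  have h2 : τs ≫ qs = a.j := hZ.lift_snd _ _ _
  have hwτs : P.weq τs := P.weq_of_comp_left hwfbZ (by rw [h1]; exact P.weq_comp ht wτt)
  have hsw : (β ≫ st) ≫ qt = a.Δ ≫ φ := by rw [Category.assoc, hst, hΔΔ]
  refine ⟨Zs, τs, qs, hwτs, hfqs, h2, hZ.lift (β ≫ st) a.Δ hsw, hZ.lift_snd _ _ _⟩

/-- Forward transfer of weak liftings along a bridge. -/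
lemma wl_fwd (hc : ∀ X : C, P.CofModel X) {a b : Node P} (e : Edge a b)
    (h : P.WeakLifting a.Δ a.j) : P.WeakLifting b.Δ b.j := by
  obtain ⟨w, β, t, φ, hw, hβ, ht, hφ, hsq, hjj, hΔΔ⟩ := e
  obtain ⟨Z1, τ1, q1, wτ1, fq1, hfac1⟩ := P.F_fac b.j
  obtain ⟨Z0, fbZ, q0, hZ, hfq0⟩ := P.pb_exists q1 φ fq1
  have hwfbZ : P.weq fbZ := (P.pb_weq fq1 hZ).1 hφ.2
  have hτw : (t ≫ τ1) ≫ q1 = a.j ≫ φ := by rw [Category.assoc, hfac1, hjj]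
  set τ0 : a.T ⟶ Z0 := hZ.lift (t ≫ τ1) a.j hτw with hτ0
  have h1 : τ0 ≫ fbZ = t ≫ τ1 := hZ.lift_fst _ _ _
  have h2 : τ0 ≫ q0 = a.j := hZ.lift_snd _ _ _
  have hwτ0 : P.weq τ0 := P.weq_of_comp_left hwfbZ (by rw [h1]; exact P.weq_comp ht wτ1)
  obtain ⟨Zx, τx, qx, wτx, fqx, hfacx, sx, hsx⟩ := h
  obtain ⟨s0, hs0⟩ := section_transfer hc fqx hfq0 wτx hwτ0 (by rw [hfacx, h2]) hsx
  have hy : (s0 ≫ fbZ) ≫ q1 = β ≫ b.Δ := by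
    rw [Category.assoc, hZ.w, ← Category.assoc, hs0, hΔΔ]
  obtain ⟨Xp, fbX, pbX, hX, hfpbX⟩ := P.pb_exists q1 b.Δ fq1
  set x : a.F ⟶ Xp := hX.lift (s0 ≫ fbZ) β hy with hx
  have hxw : P.weq (x ≫ pbX) := by rw [hX.lift_snd]; exact hβ.2
  obtain ⟨σ, hσ⟩ := sec_of_weq_comp (P := P) hc hfpbX x hxw
  refine ⟨Z1, τ1, q1, wτ1, fq1, hfac1, σ ≫ fbX, ?_⟩
  rw [Category.assoc, hX.w, ← Category.assoc, hσ, Category.id_comp]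

lemma wl_iff_of_linked (hc : ∀ X : C, P.CofModel X) {a b : Node P} (h : Linked a b) :
    (P.WeakLifting a.Δ a.j ↔ P.WeakLifting b.Δ b.j) := by
  induction h with
  | refl => exact Iff.rfl
  | tail _ e ih =>
      refine ih.trans ?_
      rcases e with e | e
      · exact ⟨wl_fwd hc e, wl_back e⟩
      · exact ⟨wl_back e, wl_fwd hc e⟩

end Nodes

section ProdMaps

variable {X X' Z Z' R R' : C}

/-- The induced map between products changing the first factor, as a pullback. -/
lemma prodMapL_isPullback {q1 : R ⟶ X} {q2 : R ⟶ Z} {q1' : R' ⟶ X'} {q2' : R' ⟶ Z}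
    (h : IsBinProd q1 q2) (h' : IsBinProd q1' q2') (f : X ⟶ X') :
    IsPullback (bpLift h' (q1 ≫ f) q2) q1 q1' f := by
  refine mk_isPullback (by simp) (fun a b w => bpLift h b (a ≫ q2')) ?_ ?_ ?_
  · intro W a b w
    refine bp_hom_ext h' ?_ ?_
    · rw [Category.assoc, bpLift_fst, ← Category.assoc, bpLift_fst, w]
    · rw [Category.assoc, bpLift_snd, bpLift_snd]
  · intro W a b w; simp
  · intro W c c' h1 h2
    refine bp_hom_ext h h2 ?_
    have e1 : c ≫ bpLift h' (q1 ≫ f) q2 ≫ q2' = c ≫ q2 := by rw [bpLift_snd]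
    have e2 : c' ≫ bpLift h' (q1 ≫ f) q2 ≫ q2' = c' ≫ q2 := by rw [bpLift_snd]
    rw [← e1, ← e2, ← Category.assoc, ← Category.assoc, h1]

lemma prodMapR_isPullback {q1 : R ⟶ X} {q2 : R ⟶ Z} {q1' : R' ⟶ X} {q2' : R' ⟶ Z'}
    (h : IsBinProd q1 q2) (h' : IsBinProd q1' q2') (g : Z ⟶ Z') :
    IsPullback (bpLift h' q1 (q2 ≫ g)) q2 q2' g := by
  refine mk_isPullback (by simp) (fun a b w => bpLift h (a ≫ q1') b) ?_ ?_ ?_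
  · intro W a b w
    refine bp_hom_ext h' ?_ ?_
    · rw [Category.assoc, bpLift_fst, bpLift_fst]
    · rw [Category.assoc, bpLift_snd, ← Category.assoc, bpLift_snd, w]
  · intro W a b w; simp
  · intro W c c' h1 h2
    refine bp_hom_ext h ?_ h2
    have e1 : c ≫ bpLift h' q1 (q2 ≫ g) ≫ q1' = c ≫ q1 := by rw [bpLift_fst]
    have e2 : c' ≫ bpLift h' q1 (q2 ≫ g) ≫ q1' = c' ≫ q1 := by rw [bpLift_fst]
    rw [← e1, ← e2, ← Category.assoc, ← Category.assoc, h1]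

lemma prodMapL_tfib {q1 : R ⟶ X} {q2 : R ⟶ Z} {q1' : R' ⟶ X'} {q2' : R' ⟶ Z}
    (h : IsBinProd q1 q2) (h' : IsBinProd q1' q2') {f : X ⟶ X'} (hf : TFib P f) :
    TFib P (bpLift h' (q1 ≫ f) q2) := by
  have hsq := prodMapL_isPullback h h' f
  exact ⟨fib_of_isPullback hf.1 hsq.flip, (P.pb_weq hf.1 hsq.flip).2 hf.2⟩

lemma prodMapR_tfib {q1 : R ⟶ X} {q2 : R ⟶ Z} {q1' : R' ⟶ X} {q2' : R' ⟶ Z'}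
    (h : IsBinProd q1 q2) (h' : IsBinProd q1' q2') {g : Z ⟶ Z'} (hg : TFib P g) :
    TFib P (bpLift h' q1 (q2 ≫ g)) := by
  have hsq := prodMapR_isPullback h h' g
  exact ⟨fib_of_isPullback hg.1 hsq.flip, (P.pb_weq hg.1 hsq.flip).2 hg.2⟩

lemma prodMapL_weq {q1 : R ⟶ X} {q2 : R ⟶ Z} {q1' : R' ⟶ X'} {q2' : R' ⟶ Z}
    (h : IsBinProd q1 q2) (h' : IsBinProd q1' q2') {f : X ⟶ X'} (hf : P.weq f)
    (hq1' : P.fib q1') : P.weq (bpLift h' (q1 ≫ f) q2) :=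
  (P.pb_weq hq1' (prodMapL_isPullback h h' f)).1 hf

lemma prodMapR_weq {q1 : R ⟶ X} {q2 : R ⟶ Z} {q1' : R' ⟶ X} {q2' : R' ⟶ Z'}
    (h : IsBinProd q1 q2) (h' : IsBinProd q1' q2') {g : Z ⟶ Z'} (hg : P.weq g)
    (hq2' : P.fib q2') : P.weq (bpLift h' q1 (q2 ≫ g)) :=
  (P.pb_weq hq2' (prodMapR_isPullback h h' g)).1 hg

end ProdMaps

section JoinConstructions

/-- Build a join from chosen factorization, pullback, C-factorization data. -/
lemma join_build {A Cc Pw Ee : C} (f : A ⟶ Pw) (g : Cc ⟶ Pw) {τ : Cc ⟶ Ee} {q : Ee ⟶ Pw}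
    (wτ : P.weq τ) (fq : P.fib q) (hfac : τ ≫ q = g)
    {Ep : C} {fbar : Ep ⟶ Ee} {pbar : Ep ⟶ A} (hpb : IsPullback fbar pbar q f)
    {Z : C} {i : Ep ⟶ Z} {σ : Z ⟶ Ee} (hci : P.cofib i) (hwσ : P.weq σ) (hiσ : i ≫ σ = fbar) :
    ∃ (Jj : C) (a : A ⟶ Jj) (bz : Z ⟶ Jj) (j : Jj ⟶ Pw),
      IsPushout pbar i a bz ∧ a ≫ j = f ∧ bz ≫ j = σ ≫ q ∧ P.IsJoin f g j := by
  obtain ⟨Q, inl, inr, hpo, _⟩ := P.po_exists i pbar hci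
  have hw : pbar ≫ f = i ≫ (σ ≫ q) := by
    rw [← Category.assoc, hiσ, hpb.w]
  set j : Q ⟶ Pw := hpo.flip.desc f (σ ≫ q) hw with hj
  have haj : inr ≫ j = f := hpo.flip.inl_desc _ _ _
  have hbzj : inl ≫ j = σ ≫ q := hpo.flip.inr_desc _ _ _
  exact ⟨Q, inr, inl, j, hpo.flip, haj, hbzj,
    ⟨Ee, τ, q, wτ, fq, hfac, Ep, Z, fbar, pbar, i, σ, inr, inl,
      hpb, hci, hwσ, hiσ, hpo.flip, haj, hbzj⟩⟩

/-- Any two F-factorizations of the same map are dominated by a third via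
trivial fibrations. -/
lemma fact_roof {Cc Pw E₁ E₂ : C} {g : Cc ⟶ Pw} {τ₁ : Cc ⟶ E₁} {q₁ : E₁ ⟶ Pw}
    {τ₂ : Cc ⟶ E₂} {q₂ : E₂ ⟶ Pw} (wτ₁ : P.weq τ₁) (fq₁ : P.fib q₁) (h₁ : τ₁ ≫ q₁ = g)
    (wτ₂ : P.weq τ₂) (fq₂ : P.fib q₂) (h₂ : τ₂ ≫ q₂ = g) :
    ∃ (R : C) (α : Cc ⟶ R) (qR : R ⟶ Pw) (ρ₁ : R ⟶ E₁) (ρ₂ : R ⟶ E₂),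
      P.weq α ∧ P.fib qR ∧ α ≫ qR = g ∧ TFib P ρ₁ ∧ TFib P ρ₂ ∧
      ρ₁ ≫ q₁ = qR ∧ ρ₂ ≫ q₂ = qR ∧ α ≫ ρ₁ = τ₁ ∧ α ≫ ρ₂ = τ₂ := by
  obtain ⟨Pp, fbP, pbP, hP, hfpbP⟩ := P.pb_exists q₂ q₁ fq₂
  have hffbP : P.fib fbP := fib_of_isPullback fq₁ hP.flip
  have hu : τ₂ ≫ q₂ = τ₁ ≫ q₁ := by rw [h₁, h₂]
  set u : Cc ⟶ Pp := hP.lift τ₂ τ₁ hu with hud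
  obtain ⟨R, α, u', wα, fu', hfacu⟩ := P.F_fac u
  set ρ₁ : R ⟶ E₁ := u' ≫ pbP with hρ₁
  set ρ₂ : R ⟶ E₂ := u' ≫ fbP with hρ₂
  have hαρ₁ : α ≫ ρ₁ = τ₁ := by rw [hρ₁, ← Category.assoc, hfacu, hud, hP.lift_snd]
  have hαρ₂ : α ≫ ρ₂ = τ₂ := by rw [hρ₂, ← Category.assoc, hfacu, hud, hP.lift_fst]
  have hwρ₁ : P.weq ρ₁ := P.weq_of_comp_right wα (hαρ₁ ▸ wτ₁)
  have hwρ₂ : P.weq ρ₂ := P.weq_of_comp_right wα (hαρ₂ ▸ wτ₂)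
  refine ⟨R, α, ρ₁ ≫ q₁, ρ₁, ρ₂, wα, P.fib_comp (P.fib_comp fu' hfpbP) fq₁, ?_,
    ⟨P.fib_comp fu' hfpbP, hwρ₁⟩, ⟨P.fib_comp fu' hffbP, hwρ₂⟩, rfl, ?_, hαρ₁, hαρ₂⟩
  · rw [← Category.assoc, hαρ₁, h₁]
  · rw [hρ₁, hρ₂, Category.assoc, Category.assoc, hP.w]

end JoinConstructions

section MoveJoin

/-- Transport a join along a trivial fibration between F-factorization objects. -/
lemma move_join {A Pw Es Et : C} {f : A ⟶ Pw}
    {qs : Es ⟶ Pw} {qt : Et ⟶ Pw}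
    {ρ : Es ⟶ Et} (hρ : TFib P ρ) (hρq : ρ ≫ qt = qs)
    {Eps : C} {fbars : Eps ⟶ Es} {pbars : Eps ⟶ A} (hpbs : IsPullback fbars pbars qs f)
    {Z : C} {i : Eps ⟶ Z} {σ : Z ⟶ Es} (hci : P.cofib i) (hwσ : P.weq σ) (hiσ : i ≫ σ = fbars)
    {Jj : C} {a : A ⟶ Jj} {bz : Z ⟶ Jj} {j : Jj ⟶ Pw}
    (hpo : IsPushout pbars i a bz) (haj : a ≫ j = f) (hbzj : bz ≫ j = σ ≫ qs)
    {Ept : C} {fbart : Ept ⟶ Et} {pbart : Ept ⟶ A} (hpbt : IsPullback fbart pbart qt f) :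
    ∃ (Z'' : C) (i'' : Ept ⟶ Z'') (σ'' : Z'' ⟶ Et) (J'' : C) (a'' : A ⟶ J'')
      (bz'' : Z'' ⟶ J'') (j'' : J'' ⟶ Pw) (e : Jj ⟶ J''),
      P.cofib i'' ∧ P.weq σ'' ∧ i'' ≫ σ'' = fbart ∧ IsPushout pbart i'' a'' bz'' ∧
      a'' ≫ j'' = f ∧ bz'' ≫ j'' = σ'' ≫ qt ∧ IsIso e ∧ e ≫ j'' = j := by
  have hmw : (fbars ≫ ρ) ≫ qt = pbars ≫ f := by
    rw [Category.assoc, hρq, hpbs.w]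
  set m : Eps ⟶ Ept := hpbt.lift (fbars ≫ ρ) pbars hmw with hmd
  have hm1 : m ≫ fbart = fbars ≫ ρ := hpbt.lift_fst _ _ _
  have hm2 : m ≫ pbart = pbars := hpbt.lift_snd _ _ _
  have hmsq : IsPullback fbars m ρ fbart := by
    refine mk_isPullback (by rw [hm1]) (fun x y w => hpbs.lift x (y ≫ pbart) ?_) ?_ ?_ ?_
    · rw [← hρq, ← Category.assoc, w, Category.assoc, Category.assoc, hpbt.w]
    · intro W x y w; exact hpbs.lift_fst _ _ _
    · intro W x y w
      refine hpbt.hom_ext ?_ ?_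
      · rw [Category.assoc, hm1, ← Category.assoc, hpbs.lift_fst, w]
      · rw [Category.assoc, hm2, hpbs.lift_snd]
    · intro W c c' e1 e2
      refine hpbs.hom_ext e1 ?_
      have h1 : c ≫ m ≫ pbart = c' ≫ m ≫ pbart := by
        rw [← Category.assoc, ← Category.assoc, e2]
      rwa [hm2] at h1
  have hwm : P.weq m := (P.pb_weq hρ.1 hmsq).2 hρ.2
  obtain ⟨Z'', nz, ne, hpoz, hcne⟩ := P.po_exists i m hci
  have hwnz : P.weq nz := (P.po_weq hci hpoz).1 hwm
  have hσw : i ≫ (σ ≫ ρ) = m ≫ fbart := by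
    rw [← Category.assoc, hiσ, hm1]
  set σ'' : Z'' ⟶ Et := hpoz.desc (σ ≫ ρ) fbart hσw with hσd
  have hσ1 : nz ≫ σ'' = σ ≫ ρ := hpoz.inl_desc _ _ _
  have hσ2 : ne ≫ σ'' = fbart := hpoz.inr_desc _ _ _
  have hwσ'' : P.weq σ'' := P.weq_of_comp_right hwnz
    (by rw [hσ1]; exact P.weq_comp hwσ hρ.2)
  obtain ⟨J'', inl₂, inr₂, hpoJ, _⟩ := P.po_exists ne pbart hcne
  have hjw : pbart ≫ f = ne ≫ (σ'' ≫ qt) := by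
    rw [← Category.assoc, hσ2, hpbt.w]
  set j'' : J'' ⟶ Pw := hpoJ.flip.desc f (σ'' ≫ qt) hjw with hjd
  have haj'' : inr₂ ≫ j'' = f := hpoJ.flip.inl_desc _ _ _
  have hbzj'' : inl₂ ≫ j'' = σ'' ≫ qt := hpoJ.flip.inr_desc _ _ _
  have hew : pbars ≫ inr₂ = i ≫ (nz ≫ inl₂) := by
    rw [← hm2, Category.assoc, ← hpoJ.w, ← Category.assoc, ← hpoz.w, Category.assoc]
  set e : Jj ⟶ J'' := hpo.desc inr₂ (nz ≫ inl₂) hew with hed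
  have he1 : a ≫ e = inr₂ := hpo.inl_desc _ _ _
  have he2 : bz ≫ e = nz ≫ inl₂ := hpo.inr_desc _ _ _
  have hz''w : i ≫ bz = m ≫ (pbart ≫ a) := by
    rw [← hpo.w, ← Category.assoc, hm2]
  set z'' : Z'' ⟶ Jj := hpoz.desc bz (pbart ≫ a) hz''w with hzd
  have hz1 : nz ≫ z'' = bz := hpoz.inl_desc _ _ _
  have hz2 : ne ≫ z'' = pbart ≫ a := hpoz.inr_desc _ _ _
  have he'w : ne ≫ z'' = pbart ≫ a := hz2
  set e' : J'' ⟶ Jj := hpoJ.flip.desc a z'' he'w.symm with he'd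
  have he'1 : inr₂ ≫ e' = a := hpoJ.flip.inl_desc _ _ _
  have he'2 : inl₂ ≫ e' = z'' := hpoJ.flip.inr_desc _ _ _
  have hee' : e ≫ e' = 𝟙 Jj := by
    refine hpo.hom_ext ?_ ?_
    · rw [← Category.assoc, he1, he'1, Category.comp_id]
    · rw [← Category.assoc, he2, Category.assoc, he'2, hz1, Category.comp_id]
  have hz''e : z'' ≫ e = inl₂ := by
    refine hpoz.hom_ext ?_ ?_
    · rw [← Category.assoc, hz1, he2]
    · rw [← Category.assoc, hz2, Category.assoc, he1, hpoJ.w]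
  have he'e : e' ≫ e = 𝟙 J'' := by
    refine hpoJ.hom_ext ?_ ?_
    · rw [← Category.assoc, he'2, hz''e, Category.comp_id]
    · rw [← Category.assoc, he'1, he1, Category.comp_id]
  have hiso : IsIso e := ⟨e', hee', he'e⟩
  have hej : e ≫ j'' = j := by
    refine hpo.hom_ext ?_ ?_
    · rw [← Category.assoc, he1, haj'', haj]
    · rw [← Category.assoc, he2, Category.assoc, hbzj'', hbzj, ← Category.assoc, hσ1,
        Category.assoc, hρq]
  exact ⟨Z'', ne, σ'', J'', inr₂, inl₂, j'', e, hcne, hwσ'', hσ2, hpoJ.flip,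
    haj'', hbzj'', hiso, hej⟩

/-- Two pushout-joins over a common `Ep` whose C-factorizations share a common
weak-equivalence target are linked through a common refinement. -/
lemma jstar {A Ep E₀ Pwc Pw₁ Pw₂ Z₁ Z₂ J₁ J₂ : C} {pbar : Ep ⟶ A} {g₀ : Ep ⟶ E₀}
    {qc : E₀ ⟶ Pwc}
    {i₁ : Ep ⟶ Z₁} {σt₁ : Z₁ ⟶ E₀} (hci₁ : P.cofib i₁) (hwσ₁ : P.weq σt₁)
    (hfc₁ : i₁ ≫ σt₁ = g₀)
    {i₂ : Ep ⟶ Z₂} {σt₂ : Z₂ ⟶ E₀} (hci₂ : P.cofib i₂) (hwσ₂ : P.weq σt₂)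
    (hfc₂ : i₂ ≫ σt₂ = g₀)
    {a₁ : A ⟶ J₁} {bz₁ : Z₁ ⟶ J₁} (hpo₁ : IsPushout pbar i₁ a₁ bz₁)
    {a₂ : A ⟶ J₂} {bz₂ : Z₂ ⟶ J₂} (hpo₂ : IsPushout pbar i₂ a₂ bz₂)
    {j₁ : J₁ ⟶ Pw₁} {j₂ : J₂ ⟶ Pw₂} {φ₁ : Pw₁ ⟶ Pwc} {φ₂ : Pw₂ ⟶ Pwc}
    {f₁ : A ⟶ Pw₁} {f₂ : A ⟶ Pw₂}
    (haj₁ : a₁ ≫ j₁ = f₁) (haj₂ : a₂ ≫ j₂ = f₂)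
    (hbzj₁ : bz₁ ≫ j₁ ≫ φ₁ = σt₁ ≫ qc) (hbzj₂ : bz₂ ≫ j₂ ≫ φ₂ = σt₂ ≫ qc)
    (hf : f₁ ≫ φ₁ = f₂ ≫ φ₂)
    (hcomm : pbar ≫ f₁ ≫ φ₁ = g₀ ≫ qc) :
    ∃ (Js : C) (js : Js ⟶ Pwc) (ω₁ : J₁ ⟶ Js) (ω₂ : J₂ ⟶ Js),
      P.weq ω₁ ∧ P.weq ω₂ ∧ ω₁ ≫ js = j₁ ≫ φ₁ ∧ ω₂ ≫ js = j₂ ≫ φ₂ := by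
  obtain ⟨P₀, n₁, n₂, hpo₀, hcn₂⟩ := P.po_exists i₁ i₂ hci₁
  have hcn₁ : P.cofib n₁ := cofib_of_isPushout hci₂ hpo₀.flip
  have hσ₀w : i₁ ≫ σt₁ = i₂ ≫ σt₂ := by rw [hfc₁, hfc₂]
  set σ₀ : P₀ ⟶ E₀ := hpo₀.desc σt₁ σt₂ hσ₀w with hσ₀d
  obtain ⟨Ph, c, σh, hcc, hwσh, hcσ⟩ := P.C_fac σ₀
  set k₁ : Z₁ ⟶ Ph := n₁ ≫ c with hk₁
  set k₂ : Z₂ ⟶ Ph := n₂ ≫ c with hk₂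
  have hk₁σ : k₁ ≫ σh = σt₁ := by rw [hk₁, Category.assoc, hcσ, hpo₀.inl_desc]
  have hk₂σ : k₂ ≫ σh = σt₂ := by rw [hk₂, Category.assoc, hcσ, hpo₀.inr_desc]
  have hwk₁ : P.weq k₁ := P.weq_of_comp_left hwσh (hk₁σ ▸ hwσ₁)
  have hwk₂ : P.weq k₂ := P.weq_of_comp_left hwσh (hk₂σ ▸ hwσ₂)
  have hck₁ : P.cofib k₁ := P.cofib_comp hcn₁ hcc
  have hck₂ : P.cofib k₂ := P.cofib_comp hcn₂ hcc
  have hieq : i₁ ≫ k₁ = i₂ ≫ k₂ := by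
    rw [hk₁, hk₂, ← Category.assoc, ← Category.assoc, hpo₀.w]
  obtain ⟨Js, inls, inrs, hpos, _⟩ := P.po_exists (i₁ ≫ k₁) pbar (P.cofib_comp hci₁ hck₁)
  have hihσ : (i₁ ≫ k₁) ≫ σh = g₀ := by rw [Category.assoc, hk₁σ, hfc₁]
  have hjsw : (i₁ ≫ k₁) ≫ (σh ≫ qc) = pbar ≫ (f₁ ≫ φ₁) := by
    rw [← Category.assoc, hihσ, hcomm]
  set js : Js ⟶ Pwc := hpos.desc (σh ≫ qc) (f₁ ≫ φ₁) hjsw with hjsd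
  have hjs1 : inls ≫ js = σh ≫ qc := hpos.inl_desc _ _ _
  have hjs2 : inrs ≫ js = f₁ ≫ φ₁ := hpos.inr_desc _ _ _
  -- the comparison maps
  have hw₁ : pbar ≫ inrs = i₁ ≫ (k₁ ≫ inls) := by
    rw [← Category.assoc, ← hpos.w]
  have hw₂ : pbar ≫ inrs = i₂ ≫ (k₂ ≫ inls) := by
    rw [← Category.assoc, ← hieq, ← hpos.w]
  set ω₁ : J₁ ⟶ Js := hpo₁.desc inrs (k₁ ≫ inls) hw₁ with hω₁d
  set ω₂ : J₂ ⟶ Js := hpo₂.desc inrs (k₂ ≫ inls) hw₂ with hω₂d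
  have hω₁1 : a₁ ≫ ω₁ = inrs := hpo₁.inl_desc _ _ _
  have hω₁2 : bz₁ ≫ ω₁ = k₁ ≫ inls := hpo₁.inr_desc _ _ _
  have hω₂1 : a₂ ≫ ω₂ = inrs := hpo₂.inl_desc _ _ _
  have hω₂2 : bz₂ ≫ ω₂ = k₂ ≫ inls := hpo₂.inr_desc _ _ _
  -- ω₁ is a pushout of k₁, hence a weak equivalence
  have hpush₁ : IsPushout k₁ bz₁ inls ω₁ := by
    refine mk_isPushout hω₁2.symm (fun x y w => hpos.desc x (a₁ ≫ y) ?_) ?_ ?_ ?_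
    · rw [Category.assoc, w, ← Category.assoc, ← hpo₁.w, Category.assoc]
    · intro W x y w; exact hpos.inl_desc _ _ _
    · intro W x y w
      refine hpo₁.hom_ext ?_ ?_
      · rw [← Category.assoc, hω₁1, hpos.inr_desc]
      · rw [← Category.assoc, hω₁2, Category.assoc, hpos.inl_desc, w]
    · intro W d d' e1 e2
      refine hpos.hom_ext e1 ?_
      rw [← hω₁1, Category.assoc, Category.assoc, e2]
  have hpush₂ : IsPushout k₂ bz₂ inls ω₂ := by
    refine mk_isPushout hω₂2.symm (fun x y w => hpos.desc x (a₂ ≫ y) ?_) ?_ ?_ ?_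
    · rw [hieq, Category.assoc, w, ← Category.assoc, ← hpo₂.w, Category.assoc]
    · intro W x y w; exact hpos.inl_desc _ _ _
    · intro W x y w
      refine hpo₂.hom_ext ?_ ?_
      · rw [← Category.assoc, hω₂1, hpos.inr_desc]
      · rw [← Category.assoc, hω₂2, Category.assoc, hpos.inl_desc, w]
    · intro W d d' e1 e2
      refine hpos.hom_ext e1 ?_
      rw [← hω₂1, Category.assoc, Category.assoc, e2]
  have hwω₁ : P.weq ω₁ := (P.po_weq hck₁ hpush₁).2 hwk₁
  have hwω₂ : P.weq ω₂ := (P.po_weq hck₂ hpush₂).2 hwk₂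
  have hc₁ : ω₁ ≫ js = j₁ ≫ φ₁ := by
    refine hpo₁.hom_ext ?_ ?_
    · rw [← Category.assoc, hω₁1, hjs2, ← Category.assoc, haj₁]
    · rw [← Category.assoc, hω₁2, Category.assoc, hjs1, ← Category.assoc, hk₁σ,
        hbzj₁]
  have hc₂ : ω₂ ≫ js = j₂ ≫ φ₂ := by
    refine hpo₂.hom_ext ?_ ?_
    · rw [← Category.assoc, hω₂1, hjs2, hf, ← Category.assoc, haj₂]
    · rw [← Category.assoc, hω₂2, Category.assoc, hjs1, ← Category.assoc, hk₂σ,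
        hbzj₂]
  exact ⟨Js, js, ω₁, ω₂, hwω₁, hwω₂, hc₁, hc₂⟩

end MoveJoin

section Ext

variable (P)

/-- Extension data for a node: products, the two comparison maps, a join and the
extended diagonal. This is exactly the data of one `IsFatWedge.succ` step. -/
structure ExtData (N : Node P) where
  Pn1 : C
  pr1 : Pn1 ⟶ N.Pw
  pr2 : Pn1 ⟶ N.F
  hP : IsBinProd pr1 pr2
  TB : C
  q1 : TB ⟶ N.T
  q2 : TB ⟶ N.F
  hTB : IsBinProd q1 q2
  PE : C
  r1 : PE ⟶ N.Pw
  r2 : PE ⟶ N.E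
  hPE : IsBinProd r1 r2
  jB : TB ⟶ Pn1
  hjB1 : jB ≫ pr1 = q1 ≫ N.j
  hjB2 : jB ≫ pr2 = q2
  pP : PE ⟶ Pn1
  hpP1 : pP ≫ pr1 = r1
  hpP2 : pP ≫ pr2 = r2 ≫ N.r
  Tn1 : C
  j1 : Tn1 ⟶ Pn1
  hjoin : P.IsJoin jB pP j1
  Δ1 : N.F ⟶ Pn1
  hΔ1 : Δ1 ≫ pr1 = N.Δ
  hΔ2 : Δ1 ≫ pr2 = 𝟙 N.F

variable {P}

lemma ExtData.efibPn1 {N : Node P} (X : ExtData P N) : P.EFibrant X.Pn1 :=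
  efib_binProd X.hP N.hPw N.hF

/-- The node at the top of an extension. -/
def ExtData.node {N : Node P} (X : ExtData P N) : Node P :=
  ⟨N.r, X.j1, X.Δ1, N.hF, X.efibPn1⟩

/-- Every node admits an extension. -/
lemma ext_exists (N : Node P) : Nonempty (ExtData P N) := by
  obtain ⟨Pn1, pr1, pr2, hP, _⟩ := prod_exists (P := P) N.hF N.Pw
  obtain ⟨TB, q1, q2, hTB, _⟩ := prod_exists (P := P) N.hF N.T
  obtain ⟨PE0, r2', r1', hPE0, _⟩ := prod_exists (P := P) N.hPw N.E
  have hPE := binProd_swap hPE0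
  set jB := bpLift hP (q1 ≫ N.j) q2 with hjBd
  set pP := bpLift hP r1' (r2' ≫ N.r) with hpPd
  obtain ⟨Ee, τ, q, wτ, fq, hfac⟩ := P.F_fac pP
  obtain ⟨Ep, fbar, pbar, hpb, _⟩ := P.pb_exists q jB fq
  obtain ⟨Z, i, σ, hci, hwσ, hiσ⟩ := P.C_fac fbar
  obtain ⟨Jj, a, bz, j, hpo, haj, hbzj, hjoin⟩ :=
    join_build (P := P) jB pP wτ fq hfac hpb hci hwσ hiσ
  exact ⟨⟨Pn1, pr1, pr2, hP, TB, q1, q2, hTB, PE0, r1', r2', hPE, jB,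
    bpLift_fst _ _ _, bpLift_snd _ _ _, pP, bpLift_fst _ _ _, bpLift_snd _ _ _,
    Jj, j, hjoin, bpLift hP N.Δ (𝟙 N.F), bpLift_fst _ _ _, bpLift_snd _ _ _⟩⟩

end Ext

/-- The cube axiom, abstracted over a `PreJCat`. -/
def HasCube (P : PreJCat C) : Prop :=
  ∀ {X00 X01 X10 X11 Y00 Y01 Y10 Y11 : C}
    {tf : X00 ⟶ X01} {tg : X00 ⟶ X10} {ti : X01 ⟶ X11} {tj : X10 ⟶ X11}
    {bf : Y00 ⟶ Y01} {bg : Y00 ⟶ Y10} {bi : Y01 ⟶ Y11} {bj : Y10 ⟶ Y11}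
    {v00 : X00 ⟶ Y00} {v01 : X01 ⟶ Y01} {v10 : X10 ⟶ Y10} {v11 : X11 ⟶ Y11},
    tf ≫ ti = tg ≫ tj →
    P.IsHPO bf bg bi bj →
    P.IsHPB tf v00 v01 bf →
    P.IsHPB tg v00 v10 bg →
    P.IsHPB ti v01 v11 bi →
    P.IsHPB tj v10 v11 bj →
    P.IsHPO tf tg ti tj

@[simp] lemma ExtData.node_r {N : Node P} (X : ExtData P N) : X.node.r = N.r := rfl
@[simp] lemma ExtData.node_j {N : Node P} (X : ExtData P N) : X.node.j = X.j1 := rfl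
@[simp] lemma ExtData.node_Δ {N : Node P} (X : ExtData P N) : X.node.Δ = X.Δ1 := rfl

section ExtStep

/-- The key step: a bridge between two nodes lifts (as a zigzag) to any two
extensions of the nodes. Uses the cube axiom. -/
theorem ext_step (hcube : HasCube P) {a b : Node P} (e : Edge a b)
    (Xa : ExtData P a) (Xb : ExtData P b) :
    Linked Xa.node Xb.node := by
  obtain ⟨w, β, t, φ, hw, hβ, ht, hφ, hsq, hjj, hΔΔ⟩ := e
  have hPa : P.EFibrant Xa.Pn1 := Xa.efibPn1
  have hPb : P.EFibrant Xb.Pn1 := Xb.efibPn1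
  -- the product comparison map φ₊
  set φp : Xa.Pn1 ⟶ Xb.Pn1 := bpLift Xb.hP (Xa.pr1 ≫ φ) (Xa.pr2 ≫ β) with hφpd
  have hφp1 : φp ≫ Xb.pr1 = Xa.pr1 ≫ φ := bpLift_fst _ _ _
  have hφp2 : φp ≫ Xb.pr2 = Xa.pr2 ≫ β := bpLift_snd _ _ _
  have hφp : TFib P φp := by
    obtain ⟨Rm, m1, m2, hRm, _⟩ := prod_exists (P := P) a.hF b.Pw
    have h1 := prodMapL_tfib (P := P) Xa.hP hRm hφ
    have h2 := prodMapR_tfib (P := P) hRm Xb.hP hβ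
    have heq : φp = bpLift hRm (Xa.pr1 ≫ φ) Xa.pr2 ≫ bpLift Xb.hP m1 (m2 ≫ β) := by
      refine bp_hom_ext Xb.hP ?_ ?_
      · rw [hφp1, Category.assoc, bpLift_fst, bpLift_fst]
      · rw [hφp2, Category.assoc, bpLift_snd, ← Category.assoc, bpLift_snd]
    rw [heq]; exact tfib_comp h1 h2
  -- the TB comparison map u
  set u : Xa.TB ⟶ Xb.TB := bpLift Xb.hTB (Xa.q1 ≫ t) (Xa.q2 ≫ β) with hud
  have hu1 : u ≫ Xb.q1 = Xa.q1 ≫ t := bpLift_fst _ _ _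
  have hu2 : u ≫ Xb.q2 = Xa.q2 ≫ β := bpLift_snd _ _ _
  have hu : P.weq u := by
    obtain ⟨Sm, s1, s2, hSm, hfs1⟩ := prod_exists (P := P) a.hF b.T
    have h1 := prodMapL_weq (P := P) Xa.hTB hSm ht hfs1
    have h2 := prodMapR_tfib (P := P) hSm Xb.hTB hβ
    have heq : u = bpLift hSm (Xa.q1 ≫ t) Xa.q2 ≫ bpLift Xb.hTB s1 (s2 ≫ β) := by
      refine bp_hom_ext Xb.hTB ?_ ?_
      · rw [hu1, Category.assoc, bpLift_fst, bpLift_fst]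
      · rw [hu2, Category.assoc, bpLift_snd, ← Category.assoc, bpLift_snd]
    rw [heq]; exact P.weq_comp h1 h2.2
  -- the PE comparison map v
  set v : Xa.PE ⟶ Xb.PE := bpLift Xb.hPE (Xa.r1 ≫ φ) (Xa.r2 ≫ w) with hvd
  have hv1 : v ≫ Xb.r1 = Xa.r1 ≫ φ := bpLift_fst _ _ _
  have hv2 : v ≫ Xb.r2 = Xa.r2 ≫ w := bpLift_snd _ _ _
  have hv : P.weq v := by
    obtain ⟨Um, u2, u1, hUm0, _⟩ := prod_exists (P := P) b.hPw a.E
    have hUm := binProd_swap hUm0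
    have h1 := prodMapL_tfib (P := P) Xa.hPE hUm hφ
    have h2 := prodMapR_weq (P := P) hUm Xb.hPE hw (fib_snd Xb.hPE b.hPw)
    have heq : v = bpLift hUm (Xa.r1 ≫ φ) Xa.r2 ≫ bpLift Xb.hPE u1 (u2 ≫ w) := by
      refine bp_hom_ext Xb.hPE ?_ ?_
      · rw [hv1, Category.assoc, bpLift_fst, bpLift_fst]
      · rw [hv2, Category.assoc, bpLift_snd, ← Category.assoc, bpLift_snd]
    rw [heq]; exact P.weq_comp h1.2 h2
  -- compatibilities
  have hujB : u ≫ Xb.jB = Xa.jB ≫ φp := by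
    refine bp_hom_ext Xb.hP ?_ ?_
    · calc (u ≫ Xb.jB) ≫ Xb.pr1 = u ≫ Xb.jB ≫ Xb.pr1 := Category.assoc _ _ _
        _ = (u ≫ Xb.q1) ≫ b.j := by rw [Xb.hjB1, Category.assoc]
        _ = Xa.q1 ≫ t ≫ b.j := by rw [hu1, Category.assoc]
        _ = (Xa.jB ≫ Xa.pr1) ≫ φ := by rw [hjj, Xa.hjB1, Category.assoc]
        _ = (Xa.jB ≫ φp) ≫ Xb.pr1 := by
              simp only [Category.assoc, hφp1]
    · calc (u ≫ Xb.jB) ≫ Xb.pr2 = u ≫ Xb.q2 := by rw [Category.assoc, Xb.hjB2]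
        _ = (Xa.jB ≫ Xa.pr2) ≫ β := by rw [hu2, Xa.hjB2]
        _ = (Xa.jB ≫ φp) ≫ Xb.pr2 := by
              simp only [Category.assoc, hφp2]
  have hvpP : v ≫ Xb.pP = Xa.pP ≫ φp := by
    refine bp_hom_ext Xb.hP ?_ ?_
    · calc (v ≫ Xb.pP) ≫ Xb.pr1 = v ≫ Xb.r1 := by rw [Category.assoc, Xb.hpP1]
        _ = (Xa.pP ≫ Xa.pr1) ≫ φ := by rw [hv1, Xa.hpP1]
        _ = (Xa.pP ≫ φp) ≫ Xb.pr1 := by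
              simp only [Category.assoc, hφp1]
    · calc (v ≫ Xb.pP) ≫ Xb.pr2 = (v ≫ Xb.r2) ≫ b.r := by
              simp only [Category.assoc, Xb.hpP2]
        _ = Xa.r2 ≫ w ≫ b.r := by rw [hv2, Category.assoc]
        _ = (Xa.pP ≫ Xa.pr2) ≫ β := by rw [hsq, Xa.hpP2, Category.assoc]
        _ = (Xa.pP ≫ φp) ≫ Xb.pr2 := by
              simp only [Category.assoc, hφp2]
  have hΔp : Xa.Δ1 ≫ φp = β ≫ Xb.Δ1 := by
    refine bp_hom_ext Xb.hP ?_ ?_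
    · calc (Xa.Δ1 ≫ φp) ≫ Xb.pr1 = (Xa.Δ1 ≫ Xa.pr1) ≫ φ := by
              simp only [Category.assoc, hφp1]
        _ = β ≫ b.Δ := by rw [Xa.hΔ1, hΔΔ]
        _ = (β ≫ Xb.Δ1) ≫ Xb.pr1 := by rw [Category.assoc, Xb.hΔ1]
    · calc (Xa.Δ1 ≫ φp) ≫ Xb.pr2 = (Xa.Δ1 ≫ Xa.pr2) ≫ β := by
              simp only [Category.assoc, hφp2]
        _ = β := by rw [Xa.hΔ2, Category.id_comp]
        _ = (β ≫ Xb.Δ1) ≫ Xb.pr2 := by rw [Category.assoc, Xb.hΔ2, Category.comp_id]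
  -- unpack the join of Xb
  obtain ⟨E₁, τ', q', wτ', fq', hfac', Epb, Zb, fbarb, pbarb, ib, σb, ab, bzb,
    hpbb, hcib, hwσb, hiσb, hpob, hajb, hbzjb⟩ := Xb.hjoin
  -- pull back q' along φ₊
  obtain ⟨E₁a, θ, qa, hθsq, hfqa⟩ := P.pb_exists q' φp fq'
  have hfθ : P.fib θ := fib_of_isPullback hφp.1 hθsq.flip
  have hwθ : P.weq θ := (P.pb_weq fq' hθsq).1 hφp.2
  have hτaw : (v ≫ τ') ≫ q' = Xa.pP ≫ φp := by
    rw [Category.assoc, hfac', hvpP]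
  set τa : Xa.PE ⟶ E₁a := hθsq.lift (v ≫ τ') Xa.pP hτaw with hτad
  have hτa1 : τa ≫ θ = v ≫ τ' := hθsq.lift_fst _ _ _
  have hτa2 : τa ≫ qa = Xa.pP := hθsq.lift_snd _ _ _
  have hwτa : P.weq τa := P.weq_of_comp_left hwθ
    (by rw [hτa1]; exact P.weq_comp hv wτ')
  -- pull back qa along Xa.jB
  obtain ⟨Epa, fbara, pbara, hpba, hfpbara⟩ := P.pb_exists qa Xa.jB hfqa
  -- the comparison m̂ of the pullbacks
  have hmw : (fbara ≫ θ) ≫ q' = (pbara ≫ u) ≫ Xb.jB := by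
    rw [Category.assoc, hθsq.w, ← Category.assoc, hpba.w, Category.assoc, Category.assoc,
      hujB]
  set mh : Epa ⟶ Epb := hpbb.lift (fbara ≫ θ) (pbara ≫ u) hmw with hmhd
  have hm1 : mh ≫ fbarb = fbara ≫ θ := hpbb.lift_fst _ _ _
  have hm2 : mh ≫ pbarb = pbara ≫ u := hpbb.lift_snd _ _ _
  have hfpbarb : P.fib pbarb := fib_of_isPullback fq' hpbb
  have hmsq : IsPullback mh pbara pbarb u := by
    refine mk_isPullback hm2
      (fun x y hxw => hpba.lift (hθsq.lift (x ≫ fbarb) (y ≫ Xa.jB)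
        (by rw [Category.assoc, hpbb.w, ← Category.assoc, hxw, Category.assoc, Category.assoc,
          hujB])) y (by rw [hθsq.lift_snd])) ?_ ?_ ?_
    · intro W x y hxw
      refine hpbb.hom_ext ?_ ?_
      · rw [Category.assoc, hm1, ← Category.assoc, hpba.lift_fst, hθsq.lift_fst]
      · rw [Category.assoc, hm2, ← Category.assoc, hpba.lift_snd, hxw]
    · intro W x y hxw; exact hpba.lift_snd _ _ _
    · intro W c c' e1 e2
      refine hpba.hom_ext ?_ e2
      refine hθsq.hom_ext ?_ ?_
      · have h1 := congrArg (· ≫ fbarb) e1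
        simp only [Category.assoc, hm1] at h1
        simpa only [Category.assoc] using h1
      · have h2 := congrArg (· ≫ Xa.jB) e2
        simp only [Category.assoc] at h2
        simp only [Category.assoc, hpba.w]
        exact h2
  have hwmh : P.weq mh := (P.pb_weq hfpbarb hmsq).1 hu
  -- the cube
  have topcomm : (mh ≫ ib) ≫ bzb = pbara ≫ (u ≫ ab) := by
    rw [Category.assoc, ← hpob.w, ← Category.assoc, hm2, Category.assoc]
  have hbot : P.IsHPO ib pbarb bzb ab := hpo_of_pushout hcib hpob.flip
  have f1 : P.IsHPB (mh ≫ ib) mh (𝟙 Zb) ib := hpb_comp_id mh ib hwmh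
  have f2 : P.IsHPB pbara mh u pbarb := hpb_of_pb hfpbarb hmsq
  have f3 : P.IsHPB bzb (𝟙 Zb) (𝟙 Xb.Tn1) bzb := hpb_id bzb
  have f4 : P.IsHPB (u ≫ ab) u (𝟙 Xb.Tn1) ab := hpb_comp_id u ab hu
  have hhpo : P.IsHPO (mh ≫ ib) pbara bzb (u ≫ ab) :=
    hcube topcomm hbot f1 f2 f3 f4
  obtain ⟨-, Z₂, i₂, σ₂, hci₂, hwσ₂, hiσ₂, Q, inlQ, inrQ, hpoQ, ω, hwω, hinlω, hinrω⟩ := hhpo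
  -- unpack the join of Xa
  obtain ⟨Ex, τx, qx, wτx, fqx, hfacx, Epx, Zx, fbarx, pbarx, ix, σx, ax, bzx,
    hpbx, hcix, hwσx, hiσx, hpox, hajx, hbzjx⟩ := Xa.hjoin
  -- roof of the two factorizations of Xa.pP
  obtain ⟨R, α, qR, ρx, ρa, wα, fqR, hfacR, hρx, hρa, hρxq, hρaq, hαρx, hαρa⟩ :=
    fact_roof (P := P) wτx fqx hfacx hwτa hfqa hτa2
  -- fresh join over R
  obtain ⟨EpR, fbarR, pbarR, hpbR, _⟩ := P.pb_exists qR Xa.jB fqR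
  obtain ⟨ZR, iR, σR, hciR, hwσR, hiσR⟩ := P.C_fac fbarR
  obtain ⟨JR, aR, bzR, jR, hpoR, hajR, hbzjR, hjoinR⟩ :=
    join_build (P := P) Xa.jB Xa.pP wα fqR hfacR hpbR hciR hwσR hiσR
  -- move the fresh join to the Ex world
  obtain ⟨Zx2, ix2, σx2, Jx2, ax2, bzx2, jx2, e₁, hcix2, hwσx2, hiσx2, hpox2,
    hajx2, hbzjx2, hisoe₁, he₁j⟩ :=
    move_join (P := P) hρx hρxq hpbR hciR hwσR hiσR hpoR hajR hbzjR hpbx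
  -- move the fresh join to the E₁a world
  obtain ⟨Za2, ia2, σa2, Ja2, aa2, bza2, ja2, e₂, hcia2, hwσa2, hiσa2, hpoa2,
    haja2, hbzja2, hisoe₂, he₂j⟩ :=
    move_join (P := P) hρa hρaq hpbR hciR hwσR hiσR hpoR hajR hbzjR hpba
  -- JSTAR₁ : link Xa's join with the moved fresh join (same base)
  obtain ⟨Js1, js1, ω₁, ω₂, hwω₁, hwω₂, hc₁, hc₂⟩ :=
    jstar (P := P) (qc := qx) (φ₁ := 𝟙 Xa.Pn1) (φ₂ := 𝟙 Xa.Pn1)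
      hcix hwσx hiσx hcix2 hwσx2 hiσx2 hpox hpox2 hajx hajx2
      (by rw [Category.comp_id, hbzjx]) (by rw [Category.comp_id, hbzjx2]) rfl
      (by rw [Category.comp_id, hpbx.w])
  -- JSTAR₂ : link the moved fresh join with Q over the base change
  have hfc₂' : i₂ ≫ (σ₂ ≫ σb) = fbara ≫ θ := by
    rw [← Category.assoc, hiσ₂, Category.assoc, hiσb, hm1]
  obtain ⟨Js2, js2, ω₁', ω₂', hwω₁', hwω₂', hc₁', hc₂'⟩ :=
    jstar (P := P) (qc := q') (φ₁ := φp) (φ₂ := 𝟙 Xb.Pn1)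
      hcia2 (P.weq_comp hwσa2 hwθ) (by rw [← Category.assoc, hiσa2])
      hci₂ (P.weq_comp hwσ₂ hwσb) hfc₂'
      hpoa2 hpoQ.flip haja2
      (show inrQ ≫ (ω ≫ Xb.j1) = u ≫ Xb.jB by
        rw [← Category.assoc, hinrω, Category.assoc, hajb])
      (show bza2 ≫ ja2 ≫ φp = (σa2 ≫ θ) ≫ q' by
        rw [← Category.assoc, hbzja2, Category.assoc, Category.assoc, hθsq.w])
      (show inlQ ≫ (ω ≫ Xb.j1) ≫ 𝟙 _ = (σ₂ ≫ σb) ≫ q' by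
        rw [Category.comp_id, ← Category.assoc, hinlω, Category.assoc, hbzjb,
          Category.assoc])
      (by rw [Category.comp_id, hujB])
      (by rw [← Category.assoc, ← hpba.w, Category.assoc, Category.assoc, hθsq.w,
        ← Category.assoc])
  -- assemble the zigzag
  have hwe₁ : P.weq e₁ := (P.iso_triv_fib e₁ hisoe₁).2
  have hwe₂ : P.weq e₂ := (P.iso_triv_fib e₂ hisoe₂).2
  set N1 : Node P := ⟨a.r, jR, Xa.Δ1, a.hF, hPa⟩ with hN1
  set N2 : Node P := ⟨a.r, jx2, Xa.Δ1, a.hF, hPa⟩ with hN2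
  set N3 : Node P := ⟨a.r, js1, Xa.Δ1, a.hF, hPa⟩ with hN3
  set N4 : Node P := ⟨a.r, ja2, Xa.Δ1, a.hF, hPa⟩ with hN4
  set N5 : Node P := ⟨b.r, ω ≫ Xb.j1, Xb.Δ1, b.hF, hPb⟩ with hN5
  set N7 : Node P := ⟨b.r, js2, Xb.Δ1, b.hF, hPb⟩ with hN7
  have l03 : Edge Xa.node N3 :=
    ⟨𝟙 _, 𝟙 _, ω₁, 𝟙 _, weq_id _, tfib_id _, hwω₁, tfib_id _,
      show 𝟙 _ ≫ a.r = a.r ≫ 𝟙 _ by simp,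
      show ω₁ ≫ js1 = Xa.j1 ≫ 𝟙 _ by simpa using hc₁,
      show Xa.Δ1 ≫ 𝟙 _ = 𝟙 _ ≫ Xa.Δ1 by simp⟩
  have l23 : Edge N2 N3 :=
    ⟨𝟙 _, 𝟙 _, ω₂, 𝟙 _, weq_id _, tfib_id _, hwω₂, tfib_id _,
      show 𝟙 _ ≫ a.r = a.r ≫ 𝟙 _ by simp,
      show ω₂ ≫ js1 = jx2 ≫ 𝟙 _ by simpa using hc₂,
      show Xa.Δ1 ≫ 𝟙 _ = 𝟙 _ ≫ Xa.Δ1 by simp⟩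
  have l12 : Edge N1 N2 :=
    ⟨𝟙 _, 𝟙 _, e₁, 𝟙 _, weq_id _, tfib_id _, hwe₁, tfib_id _,
      show 𝟙 _ ≫ a.r = a.r ≫ 𝟙 _ by simp,
      show e₁ ≫ jx2 = jR ≫ 𝟙 _ by simpa using he₁j,
      show Xa.Δ1 ≫ 𝟙 _ = 𝟙 _ ≫ Xa.Δ1 by simp⟩
  have l14 : Edge N1 N4 :=
    ⟨𝟙 _, 𝟙 _, e₂, 𝟙 _, weq_id _, tfib_id _, hwe₂, tfib_id _,
      show 𝟙 _ ≫ a.r = a.r ≫ 𝟙 _ by simp,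
      show e₂ ≫ ja2 = jR ≫ 𝟙 _ by simpa using he₂j,
      show Xa.Δ1 ≫ 𝟙 _ = 𝟙 _ ≫ Xa.Δ1 by simp⟩
  have l47 : Edge N4 N7 :=
    ⟨w, β, ω₁', φp, hw, hβ, hwω₁', hφp, hsq,
      show ω₁' ≫ js2 = ja2 ≫ φp from hc₁',
      show Xa.Δ1 ≫ φp = β ≫ Xb.Δ1 from hΔp⟩
  have l57 : Edge N5 N7 :=
    ⟨𝟙 _, 𝟙 _, ω₂', 𝟙 _, weq_id _, tfib_id _, hwω₂', tfib_id _,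
      show 𝟙 _ ≫ b.r = b.r ≫ 𝟙 _ by simp,
      show ω₂' ≫ js2 = (ω ≫ Xb.j1) ≫ 𝟙 _ by simpa using hc₂',
      show Xb.Δ1 ≫ 𝟙 _ = 𝟙 _ ≫ Xb.Δ1 by simp⟩
  have l56 : Edge N5 Xb.node :=
    ⟨𝟙 _, 𝟙 _, ω, 𝟙 _, weq_id _, tfib_id _, hwω, tfib_id _,
      show 𝟙 _ ≫ b.r = b.r ≫ 𝟙 _ by simp,
      show ω ≫ Xb.j1 = (ω ≫ Xb.j1) ≫ 𝟙 _ by simp,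
      show Xb.Δ1 ≫ 𝟙 _ = 𝟙 _ ≫ Xb.Δ1 by simp⟩
  exact Relation.ReflTransGen.trans (Relation.ReflTransGen.single (Or.inl l03))
    (Relation.ReflTransGen.trans (Relation.ReflTransGen.single (Or.inr l23))
    (Relation.ReflTransGen.trans (Relation.ReflTransGen.single (Or.inr l12))
    (Relation.ReflTransGen.trans (Relation.ReflTransGen.single (Or.inl l14))
    (Relation.ReflTransGen.trans (Relation.ReflTransGen.single (Or.inl l47))
    (Relation.ReflTransGen.trans (Relation.ReflTransGen.single (Or.inr l57))
    (Relation.ReflTransGen.single (Or.inl l56)))))))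

end ExtStep

section Assembly

lemma edge_refl (a : Node P) : Edge a a :=
  ⟨𝟙 _, 𝟙 _, 𝟙 _, 𝟙 _, weq_id _, tfib_id _, weq_id _, tfib_id _, by simp, by simp, by simp⟩

theorem lift_linked (hcube : HasCube P) {a : Node P} (Xa : ExtData P a) :
    ∀ {b : Node P}, Linked a b → ∀ (Xb : ExtData P b), Linked Xa.node Xb.node := by
  intro b h
  induction h with
  | refl => intro Xb; exact ext_step hcube (edge_refl a) Xa Xb
  | @tail c d h' e ih =>
      intro Xd
      obtain ⟨Xc⟩ := ext_exists c
      refine Relation.ReflTransGen.trans (ih Xc) ?_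
      rcases e with e | e
      · exact ext_step hcube e Xc Xd
      · exact linked_symm (ext_step hcube e Xd Xc)

lemma fatwedge_efib {E B T Pw : C} {p : E ⟶ B} {m : ℕ} {j : T ⟶ Pw} {Δ : B ⟶ Pw}
    (hW : P.IsFatWedge p m j Δ) (hB : P.EFibrant B) : P.EFibrant Pw := by
  induction hW with
  | zero => exact hB
  | succ hprev hP hTB hPE hjB hpP hjoin hΔ ih => exact efib_binProd hP ih hB

theorem wedge_linked (hcube : HasCube P) (m : ℕ) :
    ∀ {Ea Fa Eb Fb : C} (ra : Ea ⟶ Fa) (rb : Eb ⟶ Fb)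
      (hFa : P.EFibrant Fa) (hFb : P.EFibrant Fb)
      (w : Ea ⟶ Eb) (β : Fa ⟶ Fb), P.weq w → TFib P β → w ≫ rb = ra ≫ β →
      ∀ {Ta Pwa Tb Pwb : C} {ja : Ta ⟶ Pwa} {Δa : Fa ⟶ Pwa} {jb : Tb ⟶ Pwb} {Δb : Fb ⟶ Pwb}
      (Wa : P.IsFatWedge ra m ja Δa) (Wb : P.IsFatWedge rb m jb Δb),
      Linked (⟨ra, ja, Δa, hFa, fatwedge_efib Wa hFa⟩ : Node P)
        (⟨rb, jb, Δb, hFb, fatwedge_efib Wb hFb⟩ : Node P) := by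
  induction m with
  | zero =>
      intro Ea Fa Eb Fb ra rb hFa hFb w β hw hβ hsq Ta Pwa Tb Pwb ja Δa jb Δb Wa Wb
      cases Wa; cases Wb
      exact linked_of_edge ⟨w, β, w, β, hw, hβ, hw, hβ, hsq, hsq, by simp⟩
  | succ n ih =>
      intro Ea Fa Eb Fb ra rb hFa hFb w β hw hβ hsq Ta Pwa Tb Pwb ja Δa jb Δb Wa Wb
      cases Wa with
      | succ hprevA hPA hTBA hPEA hjBA hpPA hjoinA hΔA =>
      cases Wb with
      | succ hprevB hPB hTBB hPEB hjBB hpPB hjoinB hΔB =>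
      have hlink := ih ra rb hFa hFb w β hw hβ hsq hprevA hprevB
      set Na : Node P := ⟨ra, _, _, hFa, fatwedge_efib hprevA hFa⟩
      set Nb : Node P := ⟨rb, _, _, hFb, fatwedge_efib hprevB hFb⟩
      refine lift_linked hcube
        (⟨_, _, _, hPA, _, _, _, hTBA, _, _, _, hPEA, _, hjBA.1, hjBA.2, _, hpPA.1, hpPA.2,
          _, _, hjoinA, _, hΔA.1, hΔA.2⟩ : ExtData P Na)
        hlink
        (⟨_, _, _, hPB, _, _, _, hTBB, _, _, _, hPEB, _, hjBB.1, hjBB.2, _, hpPB.1, hpPB.2,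
          _, _, hjoinB, _, hΔB.1, hΔB.2⟩ : ExtData P Nb)

lemma wedge_exists {E F : C} (r : E ⟶ F) (hF : P.EFibrant F) (m : ℕ) :
    ∃ (T Pw : C) (j : T ⟶ Pw) (Δ : F ⟶ Pw), P.IsFatWedge r m j Δ := by
  induction m with
  | zero => exact ⟨E, F, r, 𝟙 F, PreJCat.IsFatWedge.zero⟩
  | succ n ih =>
      obtain ⟨T, Pw, j, Δ, hW⟩ := ih
      obtain ⟨X⟩ := ext_exists (⟨r, j, Δ, hF, fatwedge_efib hW hF⟩ : Node P)
      exact ⟨X.Tn1, X.Pn1, X.j1, X.Δ1,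
        PreJCat.IsFatWedge.succ hW X.hP X.hTB X.hPE ⟨X.hjB1, X.hjB2⟩ ⟨X.hpP1, X.hpP2⟩
          X.hjoin ⟨X.hΔ1, X.hΔ2⟩⟩

theorem wsecatE_congr (hcube : HasCube P) (hc : ∀ X : C, P.CofModel X)
    {Ea Fa Eb Fb : C} {ra : Ea ⟶ Fa} {rb : Eb ⟶ Fb}
    (hFa : P.EFibrant Fa) (hFb : P.EFibrant Fb)
    {w : Ea ⟶ Eb} {β : Fa ⟶ Fb} (hw : P.weq w) (hβ : TFib P β)
    (hsq : w ≫ rb = ra ≫ β) : P.WsecatE ra = P.WsecatE rb := by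
  unfold PreJCat.WsecatE
  refine le_antisymm (sInf_le_sInf ?_) (sInf_le_sInf ?_)
  · rintro n ⟨m, hm, T, Pw, j, Δ, hW, hWL⟩
    obtain ⟨T', Pw', j', Δ', hW'⟩ := wedge_exists (P := P) ra hFa m
    have hlink := wedge_linked hcube m ra rb hFa hFb w β hw hβ hsq hW' hW
    exact ⟨m, hm, T', Pw', j', Δ', hW', (wl_iff_of_linked hc hlink).2 hWL⟩
  · rintro n ⟨m, hm, T, Pw, j, Δ, hW, hWL⟩
    obtain ⟨T', Pw', j', Δ', hW'⟩ := wedge_exists (P := P) rb hFb m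
    have hlink := wedge_linked hcube m ra rb hFa hFb w β hw hβ hsq hW hW'
    exact ⟨m, hm, T', Pw', j', Δ', hW', (wl_iff_of_linked hc hlink).1 hWL⟩

lemma repl_roof {B F₁ F₂ : C} (τ₁ : B ⟶ F₁) (τ₂ : B ⟶ F₂) (hτ₁ : P.weq τ₁)
    (hτ₂ : P.weq τ₂) (hF₁ : P.EFibrant F₁) (hF₂ : P.EFibrant F₂) :
    ∃ (G : C) (α : B ⟶ G) (g₁ : G ⟶ F₁) (g₂ : G ⟶ F₂), P.weq α ∧ P.EFibrant G ∧
      TFib P g₁ ∧ TFib P g₂ ∧ α ≫ g₁ = τ₁ ∧ α ≫ g₂ = τ₂ := by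
  obtain ⟨H, p1, p2, hH, hfp1⟩ := prod_exists (P := P) hF₂ F₁
  have hfp2 : P.fib p2 := fib_snd hH hF₁
  have hHe : P.EFibrant H := efib_binProd hH hF₁ hF₂
  obtain ⟨G, α, hq, wα, fhq, hfac⟩ := P.F_fac (bpLift hH τ₁ τ₂)
  have h₁ : α ≫ (hq ≫ p1) = τ₁ := by rw [← Category.assoc, hfac, bpLift_fst]
  have h₂ : α ≫ (hq ≫ p2) = τ₂ := by rw [← Category.assoc, hfac, bpLift_snd]
  have hGe : P.EFibrant G := by
    have : (0 : G ⟶ (0:C)) = hq ≫ (0 : H ⟶ (0:C)) := to_zero_eq _ _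
    unfold PreJCat.EFibrant
    rw [this]; exact P.fib_comp fhq hHe
  exact ⟨G, α, hq ≫ p1, hq ≫ p2, wα, hGe,
    ⟨P.fib_comp fhq hfp1, P.weq_of_comp_right wα (h₁ ▸ hτ₁)⟩,
    ⟨P.fib_comp fhq hfp2, P.weq_of_comp_right wα (h₂ ▸ hτ₂)⟩, h₁, h₂⟩

lemma efib_of_Ffac_zero {F : C} {q : F ⟶ (0:C)} (fq : P.fib q) :
    P.EFibrant F := by
  have : (0 : F ⟶ (0:C)) = q := to_zero_eq _ _
  unfold PreJCat.EFibrant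
  rw [this]; exact fq

theorem wsecatE_key (hcube : HasCube P) (hc : ∀ X : C, P.CofModel X)
    {E B E' B' : C} (p : E ⟶ B) (p' : E' ⟶ B') (wE : E ⟶ E') (wB : B ⟶ B')
    (hwE : P.weq wE) (hwB : P.weq wB) (hsq : wE ≫ p' = p ≫ wB)
    {F F' : C} (τ : B ⟶ F) (τ' : B' ⟶ F') (hτ : P.weq τ) (hF : P.EFibrant F)
    (hτ' : P.weq τ') (hF' : P.EFibrant F') :
    P.WsecatE (p ≫ τ) = P.WsecatE (p' ≫ τ') := by
  obtain ⟨G, α, g₁, g₂, wα, hGe, hg₁, hg₂, hα₁, hα₂⟩ :=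
    repl_roof (P := P) τ (wB ≫ τ') hτ (P.weq_comp hwB hτ') hF hF'
  have e1 : P.WsecatE (p ≫ α) = P.WsecatE (p ≫ τ) :=
    wsecatE_congr hcube hc hGe hF (weq_id E) hg₁
      (by rw [Category.id_comp, Category.assoc, hα₁])
  have e2 : P.WsecatE (p ≫ α) = P.WsecatE (p ≫ wB ≫ τ') :=
    wsecatE_congr hcube hc hGe hF' (weq_id E) hg₂
      (by rw [Category.id_comp, Category.assoc, hα₂])
  have e3 : P.WsecatE (p ≫ wB ≫ τ') = P.WsecatE (p' ≫ τ') :=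
    wsecatE_congr hcube hc hF' hF' hwE (tfib_id F')
      (by rw [Category.comp_id, ← Category.assoc, hsq, Category.assoc])
  rw [← e1, e2, e3]

theorem wsecat_eq_of_square (hcube : HasCube P) (hc : ∀ X : C, P.CofModel X)
    {E B E' B' : C} (p : E ⟶ B) (p' : E' ⟶ B') (wE : E ⟶ E') (wB : B ⟶ B')
    (hwE : P.weq wE) (hwB : P.weq wB) (hsq : wE ≫ p' = p ≫ wB) :
    P.Wsecat p = P.Wsecat p' := by
  obtain ⟨F₀, τ₀, q₀, wτ₀, fq₀, _⟩ := P.F_fac (0 : B ⟶ (0:C))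
  obtain ⟨F₀', τ₀', q₀', wτ₀', fq₀', _⟩ := P.F_fac (0 : B' ⟶ (0:C))
  have hF₀ : P.EFibrant F₀ := efib_of_Ffac_zero (P := P) fq₀
  have hF₀' : P.EFibrant F₀' := efib_of_Ffac_zero (P := P) fq₀'
  refine le_antisymm ?_ ?_
  · refine le_iInf fun F' => le_iInf fun τ' => le_iInf fun hcond => ?_
    have : P.WsecatE (p ≫ τ₀) = P.WsecatE (p' ≫ τ') :=
      wsecatE_key hcube hc p p' wE wB hwE hwB hsq τ₀ τ' wτ₀ hF₀ hcond.1 hcond.2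
    rw [← this]
    exact iInf_le_of_le F₀ (iInf_le_of_le τ₀ (iInf_le _ ⟨wτ₀, hF₀⟩))
  · refine le_iInf fun F => le_iInf fun τ => le_iInf fun hcond => ?_
    have : P.WsecatE (p ≫ τ) = P.WsecatE (p' ≫ τ₀') :=
      wsecatE_key hcube hc p p' wE wB hwE hwB hsq τ τ₀' hcond.1 hcond.2 wτ₀' hF₀'
    rw [this]
    exact iInf_le_of_le F₀' (iInf_le_of_le τ₀' (iInf_le _ ⟨wτ₀', hF₀'⟩))

end Assembly

end WsecatAux

/-- In a J-category in which all objects are cofibrant models,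
weakly equivalent morphisms have the same Whitehead sectional category. -/
theorem Wsecat_eq_of_weaklyEquivMor (J : JCat C)
    (hc : ∀ X : C, J.toPreJCat.CofModel X)
    {E B E' B' : C} (p : E ⟶ B) (p' : E' ⟶ B')
    (h : J.toPreJCat.WeaklyEquivMor (Arrow.mk p) (Arrow.mk p')) :
    J.toPreJCat.Wsecat p = J.toPreJCat.Wsecat p' := by
  have hcube : WsecatAux.HasCube J.toPreJCat := fun h1 h2 h3 h4 h5 h6 =>
    J.cube h1 h2 h3 h4 h5 h6
  suffices h' : ∀ u v : Arrow C, J.toPreJCat.WeaklyEquivMor u v →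
      J.toPreJCat.Wsecat u.hom = J.toPreJCat.Wsecat v.hom from h' _ _ h
  intro u v huv
  induction huv with
  | rel x y hst =>
      obtain ⟨g, hl, hr⟩ := hst
      exact WsecatAux.wsecat_eq_of_square hcube hc x.hom y.hom g.left g.right hl hr
        (Arrow.w g)
  | refl x => rfl
  | symm x y _ ih => exact ih.symm
  | trans x y z _ _ ih1 ih2 => exact ih1.trans ih2
end
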